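/- arXiv:2202.09991 — 6 statements merged into one kernel-verified Lean document; each statement's English description precedes it below -/
import Mathlib

section
/- For points a,b in the Euclidean plane with ‖ab‖=1, let E_{ab} be the ellipse with foci a and b whose major axis has length (1+ε), and let c,d be the endpoints of its minor axis. Then the angle ∠cad is at least 2·√ε (in radians), for 0<ε<1. -/
set_option maxHeartbeats 1000000


/-- Let `a b` be points of the Euclidean plane at distance 1, let `E_{ab}` be the
ellipse with foci `a, b` and major axis of length `1+ε`, and let `c, d` be the
endpoints of its minor axis (so `‖ac‖ = ‖bc‖ = (1+ε)/2` and `d` is the reflection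
of `c` through the center, i.e. the midpoint of `ab`). Then `∠cad ≥ 2√ε`. -/
theorem minor_axis_angle (ε : ℝ) (hε0 : 0 < ε) (hε1 : ε < 1)
    (a b c d : EuclideanSpace ℝ (Fin 2)) (hab : dist a b = 1)
    (hac : dist a c = (1 + ε) / 2) (hbc : dist b c = (1 + ε) / 2)
    (hd : d = midpoint ℝ a b + (midpoint ℝ a b - c)) :
    2 * Real.sqrt ε ≤ EuclideanGeometry.angle c a d := by
  have h2m : midpoint ℝ a b + midpoint ℝ a b = a + b := midpoint_add_self ℝ a b
  have hda : d - a = b - c := by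
    rw [hd, show midpoint ℝ a b + (midpoint ℝ a b - c)
        = (midpoint ℝ a b + midpoint ℝ a b) - c by abel, h2m]
    abel
  have hnu : ‖c - a‖ = (1 + ε) / 2 := by rw [← dist_eq_norm, dist_comm]; exact hac
  have hnv : ‖b - c‖ = (1 + ε) / 2 := by rw [← dist_eq_norm]; exact hbc
  have hnab : ‖b - a‖ = 1 := by rw [← dist_eq_norm, dist_comm]; exact hab
  have hsum : (c - a) + (b - c) = b - a := by abel
  have hinner : (inner ℝ (c - a) (b - c) : ℝ) = (2 - (1+ε)^2) / 4 := by
    have := norm_add_sq_real (c - a) (b - c)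
    rw [hsum, hnab, hnu, hnv] at this
    nlinarith [this]
  have hε1' : (0:ℝ) < 1 + ε := by linarith
  have hcos : Real.cos (EuclideanGeometry.angle c a d) = (2 - (1+ε)^2) / (1+ε)^2 := by
    rw [EuclideanGeometry.angle, InnerProductGeometry.cos_angle]
    simp only [vsub_eq_sub]
    rw [hda, hinner, hnu, hnv]
    field_simp
    ring
  set s := Real.sqrt ε with hs
  have hs0 : 0 < s := Real.sqrt_pos.mpr hε0
  have hs1 : s < 1 := by
    rw [hs, show (1:ℝ) = Real.sqrt 1 by simp]
    exact Real.sqrt_lt_sqrt hε0.le hε1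
  have hssq : s ^ 2 = ε := Real.sq_sqrt hε0.le
  have hcs : 1 - s^2/2 ≤ Real.cos s := Real.one_sub_sq_div_two_le_cos
  have hcs0 : (0:ℝ) < 1 - s^2/2 := by nlinarith [hs0, hs1]
  have hA : 1 ≤ (1 - s^2/2) * (1 + ε) := by nlinarith [hssq, sq_nonneg s, mul_nonneg (sq_nonneg s) (sub_nonneg.mpr hs1.le)]
  have h1 : (1 - s^2/2)^2 ≤ Real.cos s ^ 2 := pow_le_pow_left₀ hcs0.le hcs 2
  have hB : 1 ≤ ((1 - s^2/2) * (1+ε))^2 := by nlinarith [hA]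
  have hC : (1 - s^2/2)^2 * (1+ε)^2 ≤ Real.cos s ^ 2 * (1+ε)^2 :=
    mul_le_mul_of_nonneg_right h1 (sq_nonneg _)
  have h3 : 1 ≤ Real.cos s ^ 2 * (1+ε)^2 := by rw [mul_pow] at hB; linarith
  have hkey : Real.cos (EuclideanGeometry.angle c a d) ≤ Real.cos (2 * s) := by
    rw [Real.cos_two_mul, hcos, div_le_iff₀ (by positivity)]
    nlinarith [h3]
  by_contra h
  push_neg at h
  have h2s : 2 * s ≤ Real.pi := by nlinarith [Real.pi_gt_three]
  have := Real.strictAntiOn_cos ⟨EuclideanGeometry.angle_nonneg c a d, le_trans h.le h2s⟩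
    ⟨by positivity, h2s⟩ h
  linarith [hkey, this]
end

section
/- Let G = (V,E) be an unweighted graph with girth at least 2k+2, and define a metric d_X on V by d_X(u,v) = min(d_G(u,v), 2k−1). Then every (2k−1)-spanner H = (V, E_H) of the metric space (V, d_X) (with edge weights given by d_X) has at least |E|/k edges. -/
/-- Weight of a path with respect to a (ℕ-valued) weight function on pairs. -/
def wPath {V : Type*} (d : V → V → ℕ) : List V → ℕ
  | [] => 0
  | [_] => 0
  | a :: b :: rest => d a b + wPath d (b :: rest)

open SimpleGraph

section Aux

variable {V : Type*} [DecidableEq V] {G : SimpleGraph V} {k : ℕ}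

/-- In a graph of girth ≥ 2k+2, any walk between the endpoints of an edge that
avoids the edge itself has length at least 2k+1. -/
lemma aux_no_short_detour (hgirth : (2 * k + 2 : ℕ∞) ≤ G.egirth) {u v : V}
    (hAdj : G.Adj u v) (W : G.Walk u v) (hW : s(u, v) ∉ W.edges) :
    2 * k + 1 ≤ W.length := by
  have hb : s(u, v) ∉ W.bypass.edges := fun h => hW (W.edges_bypass_subset h)
  have hb' : s(v, u) ∉ W.bypass.edges := by rwa [Sym2.eq_swap]
  have hcyc : (SimpleGraph.Walk.cons hAdj.symm W.bypass).IsCycle :=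
    SimpleGraph.Path.cons_isCycle ⟨W.bypass, W.bypass_isPath⟩ hAdj.symm hb'
  have hle : G.egirth ≤ (SimpleGraph.Walk.cons hAdj.symm W.bypass).length :=
    SimpleGraph.le_egirth.mp le_rfl _ _ hcyc
  have h2 : (2 * k + 2 : ℕ∞) ≤ ((W.bypass.length + 1 : ℕ) : ℕ∞) := by
    refine le_trans hgirth (le_trans hle ?_)
    simp
  have h3 : 2 * k + 2 ≤ W.bypass.length + 1 := by exact_mod_cast h2
  have h4 := W.length_bypass_le
  omega

/-- Uniqueness of shortest walks of length at most `k` in a graph of girth ≥ 2k+2. -/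
lemma aux_unique_sp (hconn : G.Connected) (hgirth : (2 * k + 2 : ℕ∞) ≤ G.egirth) :
    ∀ (n : ℕ) {a b : V} (P Q : G.Walk a b), P.length = n → Q.length = n →
      n = G.dist a b → n ≤ k → P = Q := by
  intro n
  induction n with
  | zero =>
    intro a b P Q hP hQ _ _
    cases P with
    | nil =>
      cases Q with
      | nil => rfl
      | cons h q => simp at hQ
    | cons h p => simp at hP
  | succ n ih =>
    intro a b P Q hP hQ hd hk
    cases P with
    | nil => simp at hP
    | cons hax P' =>
      cases Q with
      | nil => simp at hQ
      | cons hay Q' =>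
        rename_i x y
        -- both P and Q are paths (shortest walks)
        have hPpath : (SimpleGraph.Walk.cons hax P').IsPath := by
          apply SimpleGraph.Walk.isPath_of_length_eq_dist
          rw [hP]; exact hd
        have hQpath : (SimpleGraph.Walk.cons hay Q').IsPath := by
          apply SimpleGraph.Walk.isPath_of_length_eq_dist
          rw [hQ]; exact hd
        rw [SimpleGraph.Walk.cons_isPath_iff] at hPpath hQpath
        have hxy : x = y := by
          by_contra hne
          -- build a short cycle through a
          set R : G.Walk x y := P'.append Q'.reverse with hR
          have haR : a ∉ R.bypass.support := by
            intro hmem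
            have := R.support_bypass_subset hmem
            rw [hR, SimpleGraph.Walk.mem_support_append_iff] at this
            rcases this with h | h
            · exact hPpath.2 h
            · rw [SimpleGraph.Walk.support_reverse, List.mem_reverse] at h
              exact hQpath.2 h
          have hpath2 : (SimpleGraph.Walk.cons hax R.bypass).IsPath :=
            SimpleGraph.Walk.IsPath.cons R.bypass_isPath haR
          have hedge : s(y, a) ∉ (SimpleGraph.Walk.cons hax R.bypass).edges := by
            simp only [SimpleGraph.Walk.edges_cons, List.mem_cons]
            rintro (h | h)
            · rw [Sym2.eq_iff] at h
              rcases h with ⟨h1, h2⟩ | ⟨h1, h2⟩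
              · exact hax.ne h2
              · exact hne h1.symm
            · have : a ∈ R.bypass.support :=
                SimpleGraph.Walk.snd_mem_support_of_mem_edges _ h
              exact haR this
          have hcyc : (SimpleGraph.Walk.cons hay.symm
              (SimpleGraph.Walk.cons hax R.bypass)).IsCycle :=
            SimpleGraph.Path.cons_isCycle ⟨_, hpath2⟩ hay.symm hedge
          have hle : G.egirth ≤ (SimpleGraph.Walk.cons hay.symm
              (SimpleGraph.Walk.cons hax R.bypass)).length :=
            SimpleGraph.le_egirth.mp le_rfl _ _ hcyc
          have hlen : (SimpleGraph.Walk.cons hay.symm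
              (SimpleGraph.Walk.cons hax R.bypass)).length = R.bypass.length + 2 := by
            simp [SimpleGraph.Walk.length_cons]
          have hRlen : R.bypass.length ≤ 2 * n := by
            have h1 := R.length_bypass_le
            have h2 : R.length = n + n := by
              rw [hR, SimpleGraph.Walk.length_append, SimpleGraph.Walk.length_reverse]
              simp only [SimpleGraph.Walk.length_cons] at hP hQ
              omega
            omega
          have hbig : (2 * k + 2 : ℕ∞) ≤ ((R.bypass.length + 2 : ℕ) : ℕ∞) := by
            refine le_trans hgirth (le_trans hle ?_)
            rw [hlen]
          have : 2 * k + 2 ≤ R.bypass.length + 2 := by exact_mod_cast hbig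
          omega
        subst hxy
        have hdist : n = G.dist x b := by
          have h1 : G.dist x b ≤ n := by
            have := SimpleGraph.dist_le P'
            simp only [SimpleGraph.Walk.length_cons] at hP
            omega
          have h2 : G.dist a b ≤ G.dist a x + G.dist x b := hconn.dist_triangle
          have h3 : G.dist a x ≤ 1 := SimpleGraph.dist_le (SimpleGraph.Walk.cons hax .nil)
          omega
        have hPQ : P' = Q' := by
          apply ih P' Q' _ _ hdist (by omega)
          · simp only [SimpleGraph.Walk.length_cons] at hP; omega
          · simp only [SimpleGraph.Walk.length_cons] at hQ; omega
        subst hPQ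
        rfl

/-- Truncated triangle inequality. -/
lemma aux_trunc_tri (hconn : G.Connected) (M : ℕ) (a c b : V) :
    min (G.dist a b) M ≤ min (G.dist a c) M + min (G.dist c b) M := by
  have h := hconn.dist_triangle (u := a) (v := c) (w := b)
  omega

/-- The truncated distance between the ends of a list is at most its `wPath` weight. -/
lemma aux_wPath_ge (hconn : G.Connected) (M : ℕ) :
    ∀ (p : List V) (a b : V), (a :: p).getLast? = some b →
      min (G.dist a b) M ≤ wPath (fun x y => min (G.dist x y) M) (a :: p) := by
  intro p
  induction p with
  | nil =>
    intro a b hb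
    obtain rfl : a = b := by simpa using hb
    simp [wPath, SimpleGraph.dist_self]
  | cons c rest IH =>
    intro a b hb
    have hb' : (c :: rest).getLast? = some b := by
      rwa [List.getLast?_cons_cons] at hb
    have h1 := IH c b hb'
    have h2 := aux_trunc_tri hconn M a c b
    have h3 : wPath (fun x y => min (G.dist x y) M) (a :: c :: rest) =
        min (G.dist a c) M + wPath (fun x y => min (G.dist x y) M) (c :: rest) := rfl
    omega

end Aux

section Cover

variable {V : Type*} {G H : SimpleGraph V} {k : ℕ}

/-- Core covering lemma: walking along the spanner path, either the edge `s(u,v)` lies on the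
canonical shortest path between the endpoints of some `H`-edge at distance ≤ k, or we can build
a `G`-walk avoiding `s(u,v)` of length at most the remaining weight. -/
lemma aux_cover (hk : 1 ≤ k) (hconn : G.Connected)
    (sp : ∀ a b : V, {w : G.Walk a b // w.length = G.dist a b})
    {u v : V} (hAdj : G.Adj u v) :
    ∀ (p : List V) (a b : V), (a :: p).getLast? = some b →
      List.Chain' H.Adj (a :: p) → ∀ pre : ℕ, G.dist u a ≤ pre →
      pre + wPath (fun x y => min (G.dist x y) (2 * k - 1)) (a :: p) + G.dist b v ≤ 2 * k - 1 →
      (∃ a' b', H.Adj a' b' ∧ G.dist a' b' ≤ k ∧ s(u, v) ∈ (sp a' b').1.edges) ∨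
      (∃ W : G.Walk a b,
        W.length ≤ wPath (fun x y => min (G.dist x y) (2 * k - 1)) (a :: p) ∧
          s(u, v) ∉ W.edges) := by
  classical
  intro p
  induction p with
  | nil =>
    intro a b hb _ pre _ _
    obtain rfl : a = b := by simpa using hb
    exact Or.inr ⟨SimpleGraph.Walk.nil, Nat.zero_le _, by simp⟩
  | cons c rest IH =>
    intro a b hb hchain pre hpre hsum
    have hac : H.Adj a c := (List.isChain_cons_cons.mp hchain).1
    have hchain' : List.Chain' H.Adj (c :: rest) := (List.isChain_cons_cons.mp hchain).2
    have hb' : (c :: rest).getLast? = some b := by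
      rwa [List.getLast?_cons_cons] at hb
    have hwp : wPath (fun x y => min (G.dist x y) (2 * k - 1)) (a :: c :: rest) =
        min (G.dist a c) (2 * k - 1) +
          wPath (fun x y => min (G.dist x y) (2 * k - 1)) (c :: rest) := rfl
    set T := wPath (fun x y => min (G.dist x y) (2 * k - 1)) (c :: rest) with hT
    -- the H-edge (a,c) has positive distance
    have hacne : G.dist a c ≠ 0 := fun h => hac.ne (hconn.dist_eq_zero_iff.mp h)
    -- truncated distance from c to b is at most T
    have hcbT : min (G.dist c b) (2 * k - 1) ≤ T :=
      aux_wPath_ge hconn (2 * k - 1) rest c b hb'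
    -- true distance from c to b is at most T
    have hdcb : G.dist c b ≤ T := by
      rw [hwp] at hsum
      omega
    -- triangle: dist a c ≤ pre + 1 + dist b v + T
    have htri : G.dist a c ≤ pre + 1 + G.dist b v + T := by
      have t1 : G.dist a c ≤ G.dist a u + G.dist u c := hconn.dist_triangle
      have t2 : G.dist u c ≤ G.dist u v + G.dist v c := hconn.dist_triangle
      have t3 : G.dist v c ≤ G.dist v b + G.dist b c := hconn.dist_triangle
      have t4 : G.dist u v ≤ 1 := SimpleGraph.dist_le (SimpleGraph.Walk.cons hAdj .nil)
      have e1 : G.dist a u = G.dist u a := SimpleGraph.dist_comm ..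
      have e2 : G.dist v b = G.dist b v := SimpleGraph.dist_comm ..
      have e3 : G.dist b c = G.dist c b := SimpleGraph.dist_comm ..
      omega
    -- conclude dist a c ≤ k and min = dist
    have hkey : G.dist a c ≤ k ∧ min (G.dist a c) (2 * k - 1) = G.dist a c := by
      rw [hwp] at hsum
      omega
    by_cases hmem : s(u, v) ∈ (sp a c).1.edges
    · exact Or.inl ⟨a, c, hac, hkey.1, hmem⟩
    · have hpre' : G.dist u c ≤ pre + min (G.dist a c) (2 * k - 1) := by
        have t1 : G.dist u c ≤ G.dist u a + G.dist a c := hconn.dist_triangle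
        omega
      have hsum' : (pre + min (G.dist a c) (2 * k - 1)) + T + G.dist b v ≤ 2 * k - 1 := by
        rw [hwp] at hsum
        omega
      rcases IH c b hb' hchain' (pre + min (G.dist a c) (2 * k - 1)) hpre' hsum' with
        h | ⟨W', hW'len, hW'e⟩
      · exact Or.inl h
      · refine Or.inr ⟨(sp a c).1.append W', ?_, ?_⟩
        · rw [SimpleGraph.Walk.length_append, (sp a c).2, hwp]
          omega
        · rw [SimpleGraph.Walk.edges_append, List.mem_append]
          rintro (h | h)
          · exact hmem h
          · exact hW'e h

end Cover

/-- Let `G` be an unweighted connected graph with girth at least `2k+2`, and let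
`d_X(u,v) = min(d_G(u,v), 2k−1)`. Then every `(2k−1)`-spanner `H` of the metric
space `(V, d_X)` has at least `|E(G)|/k` edges. -/
theorem spanner_girth_edge_lb {V : Type*} [Fintype V] [DecidableEq V]
    (G H : SimpleGraph V) [DecidableRel G.Adj] [DecidableRel H.Adj]
    (k : ℕ) (hk : 1 ≤ k) (hconn : G.Connected)
    (hgirth : (2 * k + 2 : ℕ∞) ≤ G.egirth)
    (hspan : ∀ u v : V, ∃ p : List V,
      p.head? = some u ∧ p.getLast? = some v ∧ List.Chain' H.Adj p ∧
      wPath (fun a b => min (G.dist a b) (2 * k - 1)) p ≤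
        (2 * k - 1) * min (G.dist u v) (2 * k - 1)) :
    G.edgeFinset.card ≤ k * H.edgeFinset.card := by
  classical
  cases isEmpty_or_nonempty V with
  | inl hV =>
    have : G.edgeFinset = ∅ := by
      apply Finset.eq_empty_of_forall_notMem
      intro e
      exact fun _ => (IsEmpty.false (Sym2.instIsEmpty.false e)).elim
    rw [this]
    simp
  | inr hV =>
  -- canonical shortest walks
  have sp : ∀ a b : V, {w : G.Walk a b // w.length = G.dist a b} := fun a b =>
    Classical.indefiniteDescription _ (hconn.exists_walk_length_eq_dist a b)
  -- canonical walks are reverses of each other (for distance ≤ k)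
  have spswap : ∀ a b : V, G.dist a b ≤ k → (sp a b).1.edges = ((sp b a).1.edges).reverse := by
    intro a b hd
    have h : (sp a b).1 = (sp b a).1.reverse := by
      apply aux_unique_sp hconn hgirth (G.dist a b) _ _ (sp a b).2 _ rfl hd
      rw [SimpleGraph.Walk.length_reverse, (sp b a).2, SimpleGraph.dist_comm]
    rw [h, SimpleGraph.Walk.edges_reverse]
  -- main covering fact for every edge of G
  have cover : ∀ u v : V, G.Adj u v →
      ∃ a b : V, H.Adj a b ∧ G.dist a b ≤ k ∧ s(u, v) ∈ (sp a b).1.edges := by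
    intro u v hAdj
    obtain ⟨p, hph, hpl, hpc, hpw⟩ := hspan u v
    obtain ⟨p', rfl⟩ : ∃ t, p = u :: t := by
      cases p with
      | nil => simp at hph
      | cons x t =>
        have : x = u := by simpa using hph
        exact ⟨t, by rw [this]⟩
    have hduv : G.dist u v = 1 := SimpleGraph.dist_eq_one_iff_adj.mpr hAdj
    have hmin : min (G.dist u v) (2 * k - 1) = 1 := by rw [hduv]; omega
    have hpw' : wPath (fun a b => min (G.dist a b) (2 * k - 1)) (u :: p') ≤ 2 * k - 1 := by
      rw [hmin, mul_one] at hpw; exact hpw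
    have hsum : 0 + wPath (fun a b => min (G.dist a b) (2 * k - 1)) (u :: p') + G.dist v v ≤
        2 * k - 1 := by
      rw [SimpleGraph.dist_self]; omega
    rcases aux_cover hk hconn sp hAdj p' u v hpl hpc 0 (by rw [SimpleGraph.dist_self]) hsum with
      ⟨a, b, h1, h2, h3⟩ | ⟨W, hWlen, hWe⟩
    · exact ⟨a, b, h1, h2, h3⟩
    · exfalso
      have := aux_no_short_detour hgirth hAdj W hWe
      omega
  -- a ranking of the vertices, to orient H-edges canonically
  have eV := Fintype.equivFin V
  set r : V → ℕ := fun x => (eV x : ℕ) with hr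
  have hrinj : Function.Injective r := fun x y h => eV.injective (Fin.val_injective h)
  -- choice of oriented covering data for each edge
  have hex : ∀ e : Sym2 V, ∃ ab : V × V, e ∈ G.edgeSet →
      H.Adj ab.1 ab.2 ∧ G.dist ab.1 ab.2 ≤ k ∧ e ∈ (sp ab.1 ab.2).1.edges ∧
        r ab.1 ≤ r ab.2 := by
    intro e
    by_cases he : e ∈ G.edgeSet
    · induction e with
      | _ u v =>
        obtain ⟨a, b, h1, h2, h3⟩ := cover u v (G.mem_edgeSet.mp he)
        by_cases hab : r a ≤ r b
        · exact ⟨(a, b), fun _ => ⟨h1, h2, h3, hab⟩⟩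
        · refine ⟨(b, a), fun _ => ⟨h1.symm, by rwa [SimpleGraph.dist_comm], ?_, le_of_not_ge hab⟩⟩
          rw [spswap b a (by rwa [SimpleGraph.dist_comm])]
          rwa [List.mem_reverse]
    · exact ⟨(Classical.arbitrary V, Classical.arbitrary V), fun h => absurd h he⟩
  choose ab hab using hex
  set f : Sym2 V → Sym2 V × ℕ := fun e =>
    (s((ab e).1, (ab e).2), List.idxOf e (sp (ab e).1 (ab e).2).1.edges) with hf
  have hmaps : ∀ e ∈ G.edgeFinset, f e ∈ H.edgeFinset ×ˢ Finset.range k := by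
    intro e he
    rw [SimpleGraph.mem_edgeFinset] at he
    obtain ⟨h1, h2, h3, _⟩ := hab e he
    rw [Finset.mem_product, Finset.mem_range]
    constructor
    · rw [SimpleGraph.mem_edgeFinset]; exact h1
    · calc List.idxOf e (sp (ab e).1 (ab e).2).1.edges
          < (sp (ab e).1 (ab e).2).1.edges.length := List.idxOf_lt_length_iff.mpr h3
        _ = (sp (ab e).1 (ab e).2).1.length := (sp (ab e).1 (ab e).2).1.length_edges
        _ = G.dist (ab e).1 (ab e).2 := (sp (ab e).1 (ab e).2).2
        _ ≤ k := h2
  have hinj : Set.InjOn f G.edgeFinset := by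
    intro e₁ he₁ e₂ he₂ hfe
    rw [Finset.mem_coe, SimpleGraph.mem_edgeFinset] at he₁ he₂
    obtain ⟨ha1, hd1, hm1, ho1⟩ := hab e₁ he₁
    obtain ⟨ha2, hd2, hm2, ho2⟩ := hab e₂ he₂
    have h1 := congrArg Prod.fst hfe
    have h2 := congrArg Prod.snd hfe
    simp only [hf] at h1 h2
    have heq : (ab e₁).1 = (ab e₂).1 ∧ (ab e₁).2 = (ab e₂).2 := by
      rw [Sym2.eq_iff] at h1
      rcases h1 with ⟨hx, hy⟩ | ⟨hx, hy⟩
      · exact ⟨hx, hy⟩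
      · exfalso
        have : r (ab e₁).1 = r (ab e₁).2 := by
          rw [← hx, ← hy] at ho2
          omega
        exact ha1.ne (hrinj this)
    have heq' : ab e₁ = ab e₂ := Prod.ext heq.1 heq.2
    rw [heq'] at hm1 h2
    exact (List.idxOf_inj hm1).mp h2
  calc G.edgeFinset.card ≤ (H.edgeFinset ×ˢ Finset.range k).card :=
        Finset.card_le_card_of_injOn f hmaps hinj
    _ = H.edgeFinset.card * k := by rw [Finset.card_product, Finset.card_range]
    _ = k * H.edgeFinset.card := Nat.mul_comm _ _
end

section
/- Let G = (V,E) be an unweighted graph with girth at least 2k+2 and metric d_X(u,v) = min(d_G(u,v), 2k−1). Then every (2k−1)-spanner H of (V,d_X) has total weight w(H) ≥ |E|. -/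
open SimpleGraph

section Aux

variable {V : Type*}

lemma wPath_congr {d d' : V → V → ℕ} : ∀ {p : List V},
    List.Chain' (fun a b => d a b = d' a b) p → wPath d p = wPath d' p
  | [], _ => rfl
  | [_], _ => rfl
  | a :: b :: rest, h => by
    obtain ⟨h1, h2⟩ := List.isChain_cons_cons.mp h
    simp only [wPath, h1, wPath_congr h2]

lemma length_le_wPath {d : V → V → ℕ} : ∀ {p : List V},
    List.Chain' (fun a b => 1 ≤ d a b) p → p.length ≤ wPath d p + 1
  | [], _ => by simp [wPath]
  | [_], _ => by simp [wPath]
  | a :: b :: rest, h => by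
    obtain ⟨h1, h2⟩ := List.isChain_cons_cons.mp h
    have ih := length_le_wPath h2
    simp only [wPath, List.length_cons] at ih ⊢
    omega

lemma chain'_and {A B : V → V → Prop} (p : List V) (hA : List.Chain' A p)
    (hB : List.Chain' B p) : List.Chain' (fun a b => A a b ∧ B a b) p := by
  induction p with
  | nil => exact List.IsChain.nil
  | cons a t ih =>
    cases t with
    | nil => exact List.IsChain.singleton _
    | cons b r =>
      unfold List.Chain' at hA hB ⊢
      rw [List.isChain_cons_cons] at hA hB ⊢
      exact ⟨⟨hA.1, hB.1⟩, ih hA.2 hB.2⟩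

lemma chain_bound {d : V → V → ℕ} {m : ℕ} (p : List V) :
    List.Chain' (fun a b => 1 ≤ d a b) p → wPath d p ≤ m → 3 ≤ p.length →
    List.Chain' (fun a b => d a b < m) p := by
  induction p with
  | nil => intro _ _ h; simp at h
  | cons a tail ih =>
    intro hch hw hlen
    cases tail with
    | nil => simp at hlen
    | cons b rest =>
      cases rest with
      | nil => simp at hlen
      | cons c r =>
        obtain ⟨h1, hch'⟩ := List.isChain_cons_cons.mp hch
        have h2 : 1 ≤ d b c := (List.isChain_cons_cons.mp hch').1
        unfold List.Chain'
        rw [List.isChain_cons_cons]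
        constructor
        · have hge : 1 ≤ wPath d (b :: c :: r) := by
            simp only [wPath]; omega
          simp only [wPath] at hw
          omega
        · cases r with
          | nil =>
            rw [List.isChain_pair]
            simp only [wPath] at hw
            omega
          | cons e r' =>
            apply ih hch' ?_ (by simp)
            simp only [wPath] at hw ⊢
            omega

/-- A chosen shortest walk between two vertices. -/
noncomputable def spWalk (G : SimpleGraph V) (hc : G.Connected) (s t : V) : G.Walk s t :=
  (hc.exists_walk_length_eq_dist s t).choose

lemma spWalk_length (G : SimpleGraph V) (hc : G.Connected) (s t : V) :
    (spWalk G hc s t).length = G.dist s t :=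
  (hc.exists_walk_length_eq_dist s t).choose_spec

/-- A canonical shortest walk attached to an unordered pair. -/
noncomputable def covW (G : SimpleGraph V) (hc : G.Connected) (e : Sym2 V) :
    G.Walk e.out.1 e.out.2 :=
  spWalk G hc _ _

/-- The set of `G`-edges covered by the canonical shortest walk of a pair. -/
noncomputable def cov [DecidableEq V] (G : SimpleGraph V) (hc : G.Connected) (e : Sym2 V) :
    Finset (Sym2 V) :=
  (covW G hc e).edges.toFinset

lemma out_pair (s t : V) : (s(s, t)).out = (s, t) ∨ (s(s, t)).out = (t, s) := by
  have h : Quot.mk (Sym2.Rel V) (Quot.out (s(s, t))) = s(s, t) := Quot.out_eq _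
  rcases he : (s(s, t)).out with ⟨a, b⟩
  rw [he] at h
  rcases Sym2.eq_iff.mp h with ⟨h1, h2⟩ | ⟨h1, h2⟩
  · left; simp [h1, h2]
  · right; simp [h1, h2]

lemma covW_length (G : SimpleGraph V) (hc : G.Connected) (e : Sym2 V) :
    (covW G hc e).length = G.dist e.out.1 e.out.2 :=
  spWalk_length G hc _ _

lemma dist_out (G : SimpleGraph V) (s t : V) :
    G.dist (s(s, t)).out.1 (s(s, t)).out.2 = G.dist s t := by
  rcases out_pair s t with h | h <;> rw [h]
  exact SimpleGraph.dist_comm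

/-- The canonical shortest walk oriented from `s` to `t`. -/
noncomputable def rwalk (G : SimpleGraph V) (hc : G.Connected) (s t : V) : G.Walk s t :=
  haveI := Classical.dec ((s(s, t)).out = (s, t))
  if h : (s(s, t)).out = (s, t) then
    (covW G hc s(s, t)).copy (congrArg Prod.fst h) (congrArg Prod.snd h)
  else
    ((covW G hc s(s, t)).copy (congrArg Prod.fst ((out_pair s t).resolve_left h))
      (congrArg Prod.snd ((out_pair s t).resolve_left h))).reverse

lemma rwalk_length (G : SimpleGraph V) (hc : G.Connected) (s t : V) :
    (rwalk G hc s t).length = G.dist s t := by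
  unfold rwalk
  split
  · rw [Walk.length_copy, covW_length, dist_out]
  · rw [Walk.length_reverse, Walk.length_copy, covW_length, dist_out]

lemma rwalk_mem_cov [DecidableEq V] (G : SimpleGraph V) (hc : G.Connected) (s t : V)
    {e : Sym2 V} (h : e ∈ (rwalk G hc s t).edges) : e ∈ cov G hc s(s, t) := by
  rw [cov, List.mem_toFinset]
  unfold rwalk at h
  split at h
  · rwa [Walk.edges_copy] at h
  · rw [Walk.edges_reverse, List.mem_reverse, Walk.edges_copy] at h
    exact h

lemma cov_card_le [DecidableEq V] (G : SimpleGraph V) (hc : G.Connected) (s t : V) :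
    (cov G hc s(s, t)).card ≤ G.dist s t := by
  calc (cov G hc s(s, t)).card ≤ (covW G hc s(s, t)).edges.length :=
      List.toFinset_card_le _
    _ = (covW G hc s(s, t)).length := Walk.length_edges _
    _ = G.dist (s(s, t)).out.1 (s(s, t)).out.2 := covW_length G hc _
    _ = G.dist s t := dist_out G s t

lemma exists_walk_cover (G H : SimpleGraph V) (hc : G.Connected) (Q : V → V → Prop) :
    ∀ (p : List V) (u v : V), p.head? = some u → p.getLast? = some v →
    List.Chain' Q p →
    ∃ W : G.Walk u v, W.length = wPath G.dist p ∧
      ∀ e ∈ W.edges, ∃ s t, Q s t ∧ e ∈ (rwalk G hc s t).edges := by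
  intro p
  induction p with
  | nil => intro u v h; simp at h
  | cons a tail ih =>
    intro u v hh hl hchain
    rw [List.head?_cons, Option.some_inj] at hh
    subst hh
    cases tail with
    | nil =>
      have hv : a = v := by simpa using hl
      subst hv
      exact ⟨Walk.nil, by simp [wPath], by simp⟩
    | cons b rest =>
      have hl' : (b :: rest).getLast? = some v := by
        rwa [List.getLast?_cons_cons] at hl
      obtain ⟨hab, hchain'⟩ := List.isChain_cons_cons.mp hchain
      obtain ⟨W', hlen, hcov⟩ := ih b v rfl hl' hchain'
      refine ⟨(rwalk G hc a b).append W', ?_, ?_⟩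
      · rw [Walk.length_append, rwalk_length, hlen]
        simp [wPath]
      · intro e he
        rw [Walk.edges_append, List.mem_append] at he
        rcases he with he | he
        · exact ⟨a, b, hab, he⟩
        · exact hcov e he

end Aux

/-- Let `G` be an unweighted connected graph with girth at least `2k+2`, and let
`d_X(u,v) = min(d_G(u,v), 2k−1)`. Then every `(2k−1)`-spanner `H` of the metric
space `(V, d_X)`, with edge weights given by `d_X`, has total weight at least
`|E(G)|`. -/
theorem spanner_girth_weight_lb {V : Type*} [Fintype V] [DecidableEq V]
    (G H : SimpleGraph V) [DecidableRel G.Adj] [DecidableRel H.Adj]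
    (k : ℕ) (hk : 1 ≤ k) (hconn : G.Connected)
    (hgirth : (2 * k + 2 : ℕ∞) ≤ G.egirth)
    (hspan : ∀ u v : V, ∃ p : List V,
      p.head? = some u ∧ p.getLast? = some v ∧ List.Chain' H.Adj p ∧
      wPath (fun a b => min (G.dist a b) (2 * k - 1)) p ≤
        (2 * k - 1) * min (G.dist u v) (2 * k - 1)) :
    G.edgeFinset.card ≤
      ∑ e ∈ H.edgeFinset,
        Sym2.lift ⟨fun a b => min (G.dist a b) (2 * k - 1),
          fun a b => by simp [SimpleGraph.dist_comm, Nat.min_comm]⟩ e := by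
  classical
  set wt : Sym2 V → ℕ := Sym2.lift ⟨fun a b => min (G.dist a b) (2 * k - 1),
      fun a b => by simp [SimpleGraph.dist_comm, Nat.min_comm]⟩ with hwt
  have hwt_mk : ∀ s t : V, wt s(s, t) = min (G.dist s t) (2 * k - 1) := by
    intro s t; rw [hwt]; exact Sym2.lift_mk _ s t
  have hm1 : 1 ≤ 2 * k - 1 := by omega
  -- Key covering lemma: each G-edge is covered by some H-edge
  have key : ∀ e ∈ G.edgeFinset, ∃ e', e' ∈ H.edgeFinset ∧ e ∈ cov G hconn e' ∧
      (cov G hconn e').card ≤ wt e' := by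
    intro e he
    rw [SimpleGraph.mem_edgeFinset] at he
    revert he
    induction e using Sym2.ind with
    | _ u v =>
      intro he
      have hadj : G.Adj u v := he
      obtain ⟨p, hh, hl, hch, hwp⟩ := hspan u v
      have hd1 : G.dist u v = 1 := SimpleGraph.dist_eq_one_iff_adj.mpr hadj
      have hwp' : wPath (fun a b => min (G.dist a b) (2 * k - 1)) p ≤ 2 * k - 1 := by
        rw [hd1] at hwp
        have hmin : min 1 (2 * k - 1) = 1 := by omega
        rw [hmin, Nat.mul_one] at hwp
        exact hwp
      have hch1 : List.Chain' (fun a b => 1 ≤ min (G.dist a b) (2 * k - 1)) p :=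
        List.IsChain.imp (fun a b hab =>
          le_min (hconn.pos_dist_of_ne (H.ne_of_adj hab)) hm1) hch
      have hdist : List.Chain' (fun a b => G.dist a b ≤ 2 * k - 1) p := by
        by_cases hlen : 3 ≤ p.length
        · refine List.IsChain.imp ?_ (chain_bound p hch1 hwp' hlen)
          intro a b hlt
          by_contra hgt
          push_neg at hgt
          rw [Nat.min_eq_right hgt.le] at hlt
          exact lt_irrefl _ hlt
        · push_neg at hlen
          match p, hh, hl with
          | [x], hh, hl =>
            rw [List.head?_cons, Option.some_inj] at hh
            have hv : x = v := by simpa using hl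
            exact absurd (hh.symm.trans hv) (G.ne_of_adj hadj)
          | [x, y], hh, hl =>
            rw [List.head?_cons, Option.some_inj] at hh
            have hv : y = v := by simpa using hl
            unfold List.Chain'
            rw [List.isChain_pair, hh, hv, hd1]
            exact hm1
          | x :: y :: z :: r, hh, hl =>
            exfalso; simp at hlen; omega
      have hQ : List.Chain' (fun a b => H.Adj a b ∧ G.dist a b ≤ 2 * k - 1) p :=
        chain'_and p hch hdist
      obtain ⟨W, hWlen, hWcov⟩ :=
        exists_walk_cover G H hconn (fun a b => H.Adj a b ∧ G.dist a b ≤ 2 * k - 1)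
          p u v hh hl hQ
      have hWle : W.length ≤ 2 * k - 1 := by
        rw [hWlen]
        have : wPath G.dist p = wPath (fun a b => min (G.dist a b) (2 * k - 1)) p :=
          wPath_congr (List.IsChain.imp
            (fun a b h => (Nat.min_eq_left h).symm) hdist)
        rw [this]
        exact hwp'
      -- the edge s(u,v) must lie on W, by the girth assumption
      have hmemW : s(u, v) ∈ W.edges := by
        by_contra hnot
        set q : G.Path v u := W.reverse.toPath with hq
        have hq_edges : s(u, v) ∉ (q : G.Walk v u).edges := by
          intro hmem
          apply hnot
          have := SimpleGraph.Walk.edges_toPath_subset W.reverse hmem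
          rw [Walk.edges_reverse, List.mem_reverse] at this
          exact this
        have hcyc := SimpleGraph.Path.cons_isCycle q hadj hq_edges
        have hqlen : (q : G.Walk v u).length ≤ W.length := by
          have h1 := SimpleGraph.Walk.length_bypass_le W.reverse
          have h2 : (q : G.Walk v u).length = W.reverse.bypass.length := rfl
          rw [h2]
          rw [Walk.length_reverse] at h1
          exact h1
        have hlength : (Walk.cons hadj (q : G.Walk v u)).length ≤ 2 * k := by
          rw [Walk.length_cons]
          omega
        have hge := SimpleGraph.le_egirth.mp hgirth u (Walk.cons hadj (q : G.Walk v u)) hcyc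
        have hge' : 2 * k + 2 ≤ (Walk.cons hadj (q : G.Walk v u)).length := by
          exact_mod_cast hge
        omega
      obtain ⟨s, t, ⟨hHst, hdst⟩, hmem⟩ := hWcov _ hmemW
      refine ⟨s(s, t), ?_, ?_, ?_⟩
      · exact SimpleGraph.mem_edgeFinset.mpr hHst
      · exact rwalk_mem_cov G hconn s t hmem
      · rw [hwt_mk, Nat.min_eq_left hdst]
        exact cov_card_le G hconn s t
  -- Counting: sum the fibers of the covering map
  have key' : ∀ e : Sym2 V, ∃ e', e ∈ G.edgeFinset →
      e' ∈ H.edgeFinset ∧ e ∈ cov G hconn e' ∧ (cov G hconn e').card ≤ wt e' := by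
    intro e
    by_cases h : e ∈ G.edgeFinset
    · obtain ⟨e', he'⟩ := key e h
      exact ⟨e', fun _ => he'⟩
    · exact ⟨e, fun h' => absurd h' h⟩
  choose f hf using key'
  rw [Finset.card_eq_sum_card_fiberwise (f := f) (t := H.edgeFinset)
    (fun e he => (hf e he).1)]
  apply Finset.sum_le_sum
  intro e' he'
  rcases Finset.eq_empty_or_nonempty
      (G.edgeFinset.filter (fun e => f e = e')) with hE | ⟨x, hx⟩
  · rw [hE]; simp
  · obtain ⟨hx1, hx2⟩ := Finset.mem_filter.mp hx
    have h1 := hf x hx1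
    have hsub : G.edgeFinset.filter (fun e => f e = e') ⊆ cov G hconn e' := by
      intro y hy
      obtain ⟨hy1, hy2⟩ := Finset.mem_filter.mp hy
      have := (hf y hy1).2.1
      rwa [hy2] at this
    calc (G.edgeFinset.filter (fun e => f e = e')).card
        ≤ (cov G hconn e').card := Finset.card_le_card hsub
      _ ≤ wt e' := by rw [← hx2]; exact h1.2.2
end

section
/- Let S ⊂ ℝ^d be a finite set with at least 2 points and diam(S) ≥ 1/4, all contained in [0,1]^d. For a level ℓ > 2, let P_ℓ be a set of points of S, one from each nonempty axis-aligned grid cell of side 2^{−ℓ} of the dyadic subdivision of [0,1]^d. Then the minimum spanning tree of S has weight at least c_d · |P_ℓ| · 2^{−ℓ} for a constant c_d > 0 depending only on d. -/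
private lemma coord_le_dist {d : ℕ} (x y : EuclideanSpace ℝ (Fin d)) (k : Fin d) :
    |x k - y k| ≤ dist x y := by
  rw [EuclideanSpace.dist_eq, show |x k - y k| = dist (x k) (y k) from (Real.dist_eq _ _).symm]
  rw [Real.le_sqrt dist_nonneg (Finset.sum_nonneg fun i _ => sq_nonneg _)]
  exact Finset.single_le_sum (f := fun i => dist (x i) (y i) ^ 2)
    (fun i _ => sq_nonneg _) (Finset.mem_univ k)

private lemma greedy_indep {α : Type*} [MetricSpace α] (δ : ℝ) (hδ : 0 < δ) (m : ℕ)
    (P : Finset α) (h : ∀ p ∈ P, (P.filter (fun q => dist q p < δ)).card ≤ m) :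
    ∃ I ⊆ P, (∀ p ∈ I, ∀ q ∈ I, p ≠ q → δ ≤ dist p q) ∧ P.card ≤ m * I.card := by
  classical
  induction P using Finset.strongInduction with
  | _ P ih =>
    rcases P.eq_empty_or_nonempty with rfl | ⟨p, hp⟩
    · exact ⟨∅, by simp⟩
    · set B := P.filter (fun q => dist q p < δ) with hB
      have hpB : p ∈ B := by simp [hB, hp, hδ]
      have hBP : B ⊆ P := Finset.filter_subset _ _
      have hlt : P \ B ⊂ P := Finset.sdiff_ssubset hBP ⟨p, hpB⟩
      obtain ⟨I, hIsub, hIsep, hIcard⟩ := ih (P \ B) hlt (fun q hq =>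
        Finset.card_le_card (Finset.filter_subset_filter _ (Finset.sdiff_subset)) |>.trans
          (h q (Finset.mem_sdiff.mp hq).1))
      have hfar : ∀ q ∈ I, δ ≤ dist p q ∧ δ ≤ dist q p := by
        intro q hq
        have := (Finset.mem_sdiff.mp (hIsub hq)).2
        simp only [hB, Finset.mem_filter, not_and, not_lt] at this
        have h2 := this (Finset.mem_sdiff.mp (hIsub hq)).1
        exact ⟨dist_comm p q ▸ h2, h2⟩
      have hpI : p ∉ I := fun hpI => not_lt.mpr (hfar p hpI).1 (by simpa using hδ)
      refine ⟨insert p I, Finset.insert_subset hp (hIsub.trans Finset.sdiff_subset), ?_, ?_⟩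
      · intro a ha b hb hab
        rcases Finset.mem_insert.mp ha with h1 | h1
        · rcases Finset.mem_insert.mp hb with h2 | h2
          · exact absurd (h1.trans h2.symm) hab
          · exact h1 ▸ (hfar b h2).1
        · rcases Finset.mem_insert.mp hb with h2 | h2
          · exact h2 ▸ (hfar a h1).2
          · exact hIsep a h1 b h2 hab
      · rw [Finset.card_insert_of_notMem hpI, Nat.mul_succ]
        calc P.card = (P \ B).card + B.card := (Finset.card_sdiff_add_card_eq_card hBP).symm
          _ ≤ m * I.card + m := add_le_add hIcard (h p hp)

private lemma cell_count {d ℓ : ℕ} (P : Finset (EuclideanSpace ℝ (Fin d)))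
    (hcell : ∀ p ∈ P, ∀ q ∈ P, p ≠ q → ∃ k, ⌊p k * 2 ^ ℓ⌋ ≠ ⌊q k * 2 ^ ℓ⌋)
    (p : EuclideanSpace ℝ (Fin d)) (hp : p ∈ P) :
    (P.filter (fun q => dist q p < ((2:ℝ)⁻¹) ^ ℓ)).card ≤ 3 ^ d := by
  classical
  have key : (P.filter (fun q => dist q p < ((2:ℝ)⁻¹) ^ ℓ)).card ≤
      (Fintype.piFinset (fun k : Fin d =>
        Finset.Icc (⌊p k * 2 ^ ℓ⌋ - 1) (⌊p k * 2 ^ ℓ⌋ + 1))).card := by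
    apply Finset.card_le_card_of_injOn (fun q k => ⌊q k * 2 ^ ℓ⌋)
    · intro q hq
      rw [Finset.mem_coe, Finset.mem_filter] at hq
      rw [Finset.mem_coe]
      obtain ⟨hqP, hqd⟩ := hq
      rw [Fintype.mem_piFinset]
      intro k
      rw [Finset.mem_Icc]
      have hco : |q k - p k| < ((2:ℝ)⁻¹) ^ ℓ := lt_of_le_of_lt (coord_le_dist q p k) hqd
      have h2 : (0:ℝ) < 2 ^ ℓ := by positivity
      have hlt : |q k * 2 ^ ℓ - p k * 2 ^ ℓ| < 1 := by
        rw [← sub_mul, abs_mul, abs_of_pos h2]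
        calc |q k - p k| * 2 ^ ℓ < ((2:ℝ)⁻¹) ^ ℓ * 2 ^ ℓ := mul_lt_mul_of_pos_right hco h2
          _ = 1 := by rw [← mul_pow]; norm_num
      rw [abs_lt] at hlt
      constructor
      · have h3 : (p k * 2 ^ ℓ) - 1 ≤ q k * 2 ^ ℓ := by linarith
        have := Int.floor_le_floor h3
        rwa [show p k * 2 ^ ℓ - 1 = p k * 2 ^ ℓ + (-1 : ℤ) by push_cast; ring,
          Int.floor_add_intCast] at this
      · have h3 : q k * 2 ^ ℓ ≤ (p k * 2 ^ ℓ) + 1 := by linarith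
        have := Int.floor_le_floor h3
        rwa [show p k * 2 ^ ℓ + 1 = p k * 2 ^ ℓ + (1 : ℤ) by push_cast; ring,
          Int.floor_add_intCast] at this
    · intro x hx y hy hxy
      by_contra hne
      obtain ⟨k, hk⟩ := hcell x (Finset.mem_filter.mp hx).1 y (Finset.mem_filter.mp hy).1 hne
      exact hk (congrFun hxy k)
  calc _ ≤ _ := key
    _ = ∏ k : Fin d, (Finset.Icc (⌊p k * 2 ^ ℓ⌋ - 1) (⌊p k * 2 ^ ℓ⌋ + 1)).card :=
      Fintype.card_piFinset _
    _ = 3 ^ d := by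
      have h3 : ∀ k : Fin d, (Finset.Icc (⌊p k * 2 ^ ℓ⌋ - 1) (⌊p k * 2 ^ ℓ⌋ + 1)).card = 3 := by
        intro k
        rw [Int.card_Icc, show ⌊p k * 2 ^ ℓ⌋ + 1 + 1 - (⌊p k * 2 ^ ℓ⌋ - 1) = 3 by ring]
        rfl
      rw [Finset.prod_congr rfl (fun k _ => h3 k), Finset.prod_const, Finset.card_univ,
        Fintype.card_fin]

open Classical in
/-- Truncated edge length: the length of an edge if it has an endpoint in the closed
ball of radius `r` around `c`, else `0`. -/
noncomputable def elen {V X : Type*} [PseudoMetricSpace X] (φ : V → X) (c : X) (r : ℝ)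
    (e : Sym2 V) : ℝ :=
  if ∃ v ∈ e, dist (φ v) c ≤ r then
    Sym2.lift ⟨fun u v => dist (φ u) (φ v), fun u v => dist_comm _ _⟩ e else 0

private lemma elen_mk {V X : Type*} [PseudoMetricSpace X] (φ : V → X) (c : X) (r : ℝ)
    (u v : V) :
    elen φ c r s(u, v) =
      if dist (φ u) c ≤ r ∨ dist (φ v) c ≤ r then dist (φ u) (φ v) else 0 := by
  classical
  unfold elen
  rw [Sym2.lift_mk]
  exact if_congr (by simp) rfl rfl

private lemma elen_nonneg {V X : Type*} [PseudoMetricSpace X] (φ : V → X) (c : X) (r : ℝ)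
    (e : Sym2 V) : 0 ≤ elen φ c r e := by
  induction e using Sym2.ind with
  | _ u v =>
    rw [elen_mk]
    split
    · exact dist_nonneg
    · exact le_rfl

private lemma elen_le {V X : Type*} [PseudoMetricSpace X] (φ : V → X) (c : X) (r : ℝ)
    (u v : V) : elen φ c r s(u, v) ≤ dist (φ u) (φ v) := by
  rw [elen_mk]
  split
  · exact le_rfl
  · exact dist_nonneg

private lemma walk_lb {V X : Type*} [PseudoMetricSpace X] {G : SimpleGraph V} (φ : V → X)
    (c : X) (r : ℝ) {a b : V} (w : G.Walk a b) (hb : r < dist (φ b) c) :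
    r - dist (φ a) c ≤ (w.edges.map (elen φ c r)).sum := by
  induction w with
  | nil => simpa using le_of_lt (by linarith)
  | @cons u v b h p ih =>
    rw [SimpleGraph.Walk.edges_cons, List.map_cons, List.sum_cons]
    have hnn : (0:ℝ) ≤ (p.edges.map (elen φ c r)).sum :=
      List.sum_nonneg (by
        intro x hx
        simp only [List.mem_map] at hx
        obtain ⟨e, _, rfl⟩ := hx
        exact elen_nonneg _ _ _ _)
    rw [elen_mk]
    by_cases hu : dist (φ u) c ≤ r
    · rw [if_pos (Or.inl hu)]
      have htri : dist (φ v) c ≤ dist (φ u) (φ v) + dist (φ u) c := by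
        calc dist (φ v) c ≤ dist (φ v) (φ u) + dist (φ u) c := dist_triangle _ _ _
          _ = dist (φ u) (φ v) + dist (φ u) c := by rw [dist_comm]
      linarith [ih hb]
    · have h1 : (0:ℝ) ≤ if dist (φ u) c ≤ r ∨ dist (φ v) c ≤ r then dist (φ u) (φ v) else 0 := by
        split
        · exact dist_nonneg
        · exact le_rfl
      push_neg at hu
      linarith

private lemma center_lb {V X : Type*} [MetricSpace X] [Fintype V] {G : SimpleGraph V}
    [DecidableEq (Sym2 V)] [DecidableRel G.Adj]
    (hG : G.Preconnected) (φ : V → X) (r : ℝ) (a q : V) (hq : r < dist (φ q) (φ a)) :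
    r ≤ ∑ e ∈ G.edgeFinset, elen φ (φ a) r e := by
  classical
  obtain ⟨w⟩ := hG a q
  have hnodup : w.bypass.edges.Nodup := w.bypass_isPath.edges_nodup
  have h1 := walk_lb φ (φ a) r w.bypass hq
  rw [dist_self, sub_zero] at h1
  have h2 := List.sum_toFinset (elen φ (φ a) r) hnodup
  refine h1.trans (h2.ge.trans ?_)
  refine Finset.sum_le_sum_of_subset_of_nonneg ?_ (fun e _ _ => elen_nonneg _ _ _ _)
  intro e he
  rw [List.mem_toFinset] at he
  exact SimpleGraph.mem_edgeFinset.mpr (w.bypass.edges_subset_edgeSet he)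

private lemma double_count {V X : Type*} [MetricSpace X] (φ : V → X) (r : ℝ) (hr : 0 < r)
    (I : Finset X) (hsep : ∀ p ∈ I, ∀ q ∈ I, p ≠ q → 4 * r ≤ dist p q) (e : Sym2 V) :
    ∑ i ∈ I, elen φ i r e ≤
      2 * Sym2.lift ⟨fun u v : V => dist (φ u) (φ v), fun u v => dist_comm _ _⟩ e := by
  classical
  induction e using Sym2.ind with
  | _ u v =>
    rw [Sym2.lift_mk]
    have hcard : ∀ x : V, (I.filter (fun i => dist (φ x) i ≤ r)).card ≤ 1 := by
      intro x
      rw [Finset.card_le_one]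
      intro a ha b hb
      rw [Finset.mem_filter] at ha hb
      by_contra hne
      have := hsep a ha.1 b hb.1 hne
      have htri : dist a b ≤ dist (φ x) a + dist (φ x) b := by
        calc dist a b ≤ dist a (φ x) + dist (φ x) b := dist_triangle _ _ _
          _ = dist (φ x) a + dist (φ x) b := by rw [dist_comm]
      linarith [ha.2, hb.2]
    have hsplit : ∀ i ∈ I, elen φ i r s(u, v) ≤
        (if dist (φ u) i ≤ r then dist (φ u) (φ v) else 0) +
        (if dist (φ v) i ≤ r then dist (φ u) (φ v) else 0) := by
      intro i _
      rw [elen_mk]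
      by_cases h1 : dist (φ u) i ≤ r <;> by_cases h2 : dist (φ v) i ≤ r <;>
        simp [h1, h2] <;> positivity
    calc ∑ i ∈ I, elen φ i r s(u, v)
        ≤ ∑ i ∈ I, ((if dist (φ u) i ≤ r then dist (φ u) (φ v) else 0) +
            (if dist (φ v) i ≤ r then dist (φ u) (φ v) else 0)) :=
          Finset.sum_le_sum hsplit
      _ = (∑ i ∈ I, if dist (φ u) i ≤ r then dist (φ u) (φ v) else 0) +
          (∑ i ∈ I, if dist (φ v) i ≤ r then dist (φ u) (φ v) else 0) := Finset.sum_add_distrib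
      _ ≤ dist (φ u) (φ v) + dist (φ u) (φ v) := by
          gcongr ?_ + ?_ <;>
          · rw [← Finset.sum_filter, Finset.sum_const, nsmul_eq_mul]
            calc _ ≤ (1:ℝ) * dist (φ u) (φ v) := by
                  apply mul_le_mul_of_nonneg_right _ dist_nonneg
                  exact_mod_cast hcard _
              _ = dist (φ u) (φ v) := one_mul _
      _ = 2 * dist (φ u) (φ v) := by ring

/-- Let `S ⊂ [0,1]^d` be finite with `|S| ≥ 2` and `diam(S) ≥ 1/4`. For a level
`ℓ > 2`, let `P` consist of points of `S` lying in pairwise distinct dyadic grid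
cells of side `2^{−ℓ}`. Then every spanning connected graph on `S` (in
particular the MST) has weight at least `c_d · |P| · 2^{−ℓ}` for a constant
`c_d > 0` depending only on `d`. -/
theorem mst_weight_lb (d : ℕ) (hd : 1 ≤ d) :
    ∃ c : ℝ, 0 < c ∧
      ∀ (S P : Finset (EuclideanSpace ℝ (Fin d))) (ℓ : ℕ), 2 < ℓ →
        2 ≤ S.card →
        (∀ p ∈ S, ∀ k, p k ∈ Set.Icc (0 : ℝ) 1) →
        (1 / 4 : ℝ) ≤ Metric.diam (S : Set (EuclideanSpace ℝ (Fin d))) →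
        P ⊆ S →
        (∀ p ∈ P, ∀ q ∈ P, p ≠ q → ∃ k, ⌊p k * 2 ^ ℓ⌋ ≠ ⌊q k * 2 ^ ℓ⌋) →
        ∀ (T : SimpleGraph S), ∀ (_ : DecidableRel T.Adj), T.Connected →
          c * P.card * ((2 : ℝ)⁻¹) ^ ℓ ≤
            ∑ e ∈ T.edgeFinset,
              Sym2.lift ⟨fun u v : S => dist (u : EuclideanSpace ℝ (Fin d)) v,
                fun u v => dist_comm _ _⟩ e := by
  refine ⟨((8:ℝ) * 3 ^ d)⁻¹, by positivity, ?_⟩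
  intro S P ℓ hℓ hS2 hbox hdiam hPS hcell T instT hconn
  classical
  set δ : ℝ := ((2:ℝ)⁻¹) ^ ℓ with hδdef
  have hδ0 : 0 < δ := by positivity
  set r : ℝ := δ / 4 with hrdef
  have hr0 : 0 < r := by positivity
  obtain ⟨I, hIP, hsep, hPcard⟩ := greedy_indep δ hδ0 (3 ^ d) P (cell_count P hcell)
  have hsep4 : ∀ p ∈ I, ∀ q ∈ I, p ≠ q → 4 * r ≤ dist p q := by
    intro p hp q hq hne
    have h4 : 4 * r = δ := by rw [hrdef]; ring
    rw [h4]
    exact hsep p hp q hq hne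
  set len : Sym2 ↥S → ℝ :=
    Sym2.lift ⟨fun u v : S => dist (u : EuclideanSpace ℝ (Fin d)) v,
      fun u v => dist_comm _ _⟩ with hlen
  set W := ∑ e ∈ T.edgeFinset, len e with hW
  have hlen0 : ∀ e : Sym2 ↥S, 0 ≤ len e := by
    intro e
    induction e using Sym2.ind with
    | _ u v => rw [hlen, Sym2.lift_mk]; exact dist_nonneg
  have hW0 : 0 ≤ W := Finset.sum_nonneg (fun e _ => hlen0 e)
  have hIS : ∀ i ∈ I, i ∈ S := fun i hi => hPS (hIP hi)
  have hδsmall : δ ≤ 1/8 := by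
    rw [hδdef]
    calc ((2:ℝ)⁻¹) ^ ℓ ≤ ((2:ℝ)⁻¹) ^ 3 :=
          pow_le_pow_of_le_one (by norm_num) (by norm_num) hℓ
      _ = 1/8 := by norm_num
  have hcenter : ∀ i ∈ I, r ≤ ∑ e ∈ T.edgeFinset, elen (Subtype.val) i r e := by
    intro i hi
    have hfar : ∃ q ∈ S, r < dist q i := by
      by_contra hno
      push_neg at hno
      have hdle : Metric.diam (S : Set (EuclideanSpace ℝ (Fin d))) ≤ 2 * r :=
        Metric.diam_le_of_forall_dist_le (by positivity)
          (fun x hx y hy => by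
            calc dist x y ≤ dist x i + dist i y := dist_triangle _ _ _
              _ = dist x i + dist y i := by rw [dist_comm i y]
              _ ≤ r + r := add_le_add (hno x hx) (hno y hy)
              _ = 2 * r := by ring)
      have : r = δ / 4 := hrdef
      linarith
    obtain ⟨q, hqS, hq⟩ := hfar
    exact center_lb hconn.preconnected (Subtype.val : ↥S → EuclideanSpace ℝ (Fin d)) r
      ⟨i, hIS i hi⟩ ⟨q, hqS⟩ hq
  have hsum : (I.card : ℝ) * r ≤ 2 * W := by
    calc (I.card : ℝ) * r = ∑ _i ∈ I, r := by rw [Finset.sum_const, nsmul_eq_mul]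
      _ ≤ ∑ i ∈ I, ∑ e ∈ T.edgeFinset, elen Subtype.val i r e := Finset.sum_le_sum hcenter
      _ = ∑ e ∈ T.edgeFinset, ∑ i ∈ I, elen Subtype.val i r e := Finset.sum_comm
      _ ≤ ∑ e ∈ T.edgeFinset, 2 * len e :=
          Finset.sum_le_sum (fun e _ => double_count Subtype.val r hr0 I hsep4 e)
      _ = 2 * W := by rw [hW, Finset.mul_sum]
  have hPc : (P.card : ℝ) ≤ 3 ^ d * I.card := by exact_mod_cast hPcard
  have h3d : (0:ℝ) < 3 ^ d := by positivity
  calc ((8:ℝ) * 3 ^ d)⁻¹ * P.card * δ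
      ≤ ((8:ℝ) * 3 ^ d)⁻¹ * (3 ^ d * I.card) * δ := by
        apply mul_le_mul_of_nonneg_right _ hδ0.le
        exact mul_le_mul_of_nonneg_left hPc (by positivity)
    _ = (I.card : ℝ) * r / 2 := by rw [hrdef]; field_simp; ring
    _ ≤ W := by linarith
end

section
/- Let (X,d) be a finite ultrametric, and consider the spanning tree H produced online by connecting each arriving point to the earliest-arrived among its nearest neighbors in the current point set. Then H is a minimum spanning tree of the complete weighted graph on X with weights d. -/
open Finset SimpleGraph

private lemma um_key : ∀ (n : ℕ) (d : Fin n → Fin n → ℝ)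
    (hsymm : ∀ u v, d u v = d v u)
    (_hnonneg : ∀ u v, 0 ≤ d u v)
    (_hult : ∀ x y z, d x z ≤ max (d x y) (d y z))
    (parent : Fin n → Fin n)
    (_hpar : ∀ i : Fin n, 0 < (i : ℕ) →
      parent i < i ∧ (∀ j : Fin n, j < i → d (parent i) i ≤ d j i))
    (T : SimpleGraph (Fin n)) (instE : Fintype T.edgeSet),
    T.Connected →
    (∑ i ∈ Finset.univ.filter (fun i : Fin n => 0 < (i : ℕ)), d (parent i) i)
      ≤ ∑ e ∈ @SimpleGraph.edgeFinset _ T instE, Sym2.lift ⟨d, hsymm⟩ e := by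
  intro n
  induction n with
  | zero =>
    intro d hsymm hnonneg hult parent hpar T instE hT
    have h0 : (Finset.univ.filter (fun i : Fin 0 => 0 < (i : ℕ))) = ∅ := by
      ext i; exact i.elim0
    rw [h0, Finset.sum_empty]
    refine Finset.sum_nonneg fun e _ => ?_
    induction e using Sym2.ind with
    | _ a b => exact a.elim0
  | succ n ih =>
    intro d hsymm hnonneg hult parent hpar T instE hT
    set w : Sym2 (Fin (n+1)) → ℝ := Sym2.lift ⟨d, hsymm⟩ with hw
    have hwnn : ∀ e, 0 ≤ w e := by
      intro e
      induction e using Sym2.ind with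
      | _ a b => simpa [hw] using hnonneg a b
    rcases Nat.eq_zero_or_pos n with hn | hn
    · subst hn
      have h0 : (Finset.univ.filter (fun i : Fin 1 => 0 < (i : ℕ))) = ∅ := by
        ext i
        have : (i : ℕ) = 0 := by omega
        simp [this]
      rw [h0, Finset.sum_empty]
      exact Finset.sum_nonneg (fun e _ => hwnn e)
    · set x : Fin (n+1) := Fin.last n with hx
      have hxval : (x : ℕ) = n := rfl
      letI : Fintype ↑(T.neighborSet x) := (Set.toFinite _).fintype
      set N : Finset (Fin (n+1)) := T.neighborFinset x with hN
      -- N is nonempty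
      have hNne : N.Nonempty := by
        have hz : x ≠ (⟨0, by omega⟩ : Fin (n+1)) := by
          intro h
          have := congrArg Fin.val h
          simp [hxval] at this
          omega
        obtain ⟨p⟩ := hT.preconnected x ⟨0, by omega⟩
        have hnp : ¬ p.Nil := SimpleGraph.Walk.not_nil_of_ne hz
        exact ⟨p.getVert 1, (T.mem_neighborFinset x _).mpr
          (by simpa using SimpleGraph.Walk.adj_snd hnp)⟩
      obtain ⟨u₁, hu₁N, hu₁min⟩ := Finset.exists_min_image N (fun u => d u x) hNne
      have hu₁adj : T.Adj x u₁ := (T.mem_neighborFinset x _).mp hu₁N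
      have hu₁x : u₁ ≠ x := hu₁adj.ne'
      have hu₁n : (u₁ : ℕ) < n := Fin.val_lt_last hu₁x
      set u₁' : Fin n := ⟨u₁, hu₁n⟩ with hu₁'
      set proj : Fin (n+1) → Fin n := fun v => if h : (v:ℕ) < n then ⟨v, h⟩ else u₁' with hproj
      have hcast : ∀ (v : Fin (n+1)) (h : (v:ℕ) < n), Fin.castSucc (⟨(v:ℕ), h⟩ : Fin n) = v := by
        intro v h; ext; simp
      set T' : SimpleGraph (Fin n) := SimpleGraph.fromRel
        (fun a b => T.Adj a.castSucc b.castSucc ∨ (a.castSucc = u₁ ∧ T.Adj x b.castSucc)) with hT'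
      have hcast1 : Fin.castSucc u₁' = u₁ := by ext; simp [hu₁']
      -- step lemma
      have hstep : ∀ a b : Fin (n+1), T.Adj a b → T'.Reachable (proj a) (proj b) := by
        intro a b hab
        have hxa : ¬ ((a:ℕ) < n) → a = x := by
          intro h; ext; simp [hxval]; omega
        have hxb : ¬ ((b:ℕ) < n) → b = x := by
          intro h; ext; simp [hxval]; omega
        by_cases ha : (a:ℕ) < n <;> by_cases hb : (b:ℕ) < n
        · apply SimpleGraph.Adj.reachable
          simp only [hproj, dif_pos ha, dif_pos hb]
          rw [hT', SimpleGraph.fromRel_adj]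
          refine ⟨?_, Or.inl (Or.inl ?_)⟩
          · intro h
            exact hab.ne (by
              have := congrArg Fin.val h
              simp at this
              exact Fin.ext this)
          · rw [hcast a ha, hcast b hb]; exact hab
        · -- b = x, a < n
          have hbx := hxb hb
          rw [hbx] at hab
          have haN : T.Adj x a := hab.symm
          rw [hbx]
          simp only [hproj, dif_pos ha, dif_neg (by simp [hxval] : ¬ ((x:ℕ) < n))]
          by_cases hau : (a:ℕ) = (u₁:ℕ)
          · have : (⟨(a:ℕ), ha⟩ : Fin n) = u₁' := by ext; simp [hu₁', hau]
            rw [this]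
          · apply SimpleGraph.Adj.reachable
            rw [hT', SimpleGraph.fromRel_adj]
            refine ⟨?_, Or.inr (Or.inr ⟨hcast1, ?_⟩)⟩
            · intro h
              have := congrArg Fin.val h
              simp [hu₁'] at this
              exact hau this
            · rw [hcast a ha]; exact haN
        · -- a = x, b < n
          have hax := hxa ha
          rw [hax] at hab
          rw [hax]
          simp only [hproj, dif_pos hb, dif_neg (by simp [hxval] : ¬ ((x:ℕ) < n))]
          by_cases hbu : (b:ℕ) = (u₁:ℕ)
          · have : (⟨(b:ℕ), hb⟩ : Fin n) = u₁' := by ext; simp [hu₁', hbu]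
            rw [this]
          · apply SimpleGraph.Adj.reachable
            rw [hT', SimpleGraph.fromRel_adj]
            refine ⟨?_, Or.inl (Or.inr ⟨hcast1, ?_⟩)⟩
            · intro h
              have := congrArg Fin.val h
              simp [hu₁'] at this
              exact hbu this.symm
            · rw [hcast b hb]; exact hab
        · exact absurd ((hxa ha).trans (hxb hb).symm) hab.ne
      have hreach : ∀ a b : Fin (n+1), T.Reachable a b → T'.Reachable (proj a) (proj b) := by
        intro a b h
        obtain ⟨p⟩ := h
        induction p with
        | nil => exact SimpleGraph.Reachable.refl _
        | cons h p ihp => exact (hstep _ _ h).trans ihp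
      have hprojcast : ∀ a : Fin n, proj a.castSucc = a := by
        intro a
        simp only [hproj]
        rw [dif_pos (by simp [a.isLt])]
        ext; simp
      have hT'conn : T'.Connected := by
        haveI : Nonempty (Fin n) := ⟨⟨0, hn⟩⟩
        refine ⟨fun a b => ?_⟩
        have := hreach a.castSucc b.castSucc (hT.preconnected _ _)
        rwa [hprojcast, hprojcast] at this
      -- transported data
      set d' : Fin n → Fin n → ℝ := fun a b => d a.castSucc b.castSucc with hd'
      have hsymm' : ∀ u v, d' u v = d' v u := fun u v => hsymm _ _
      set parent' : Fin n → Fin n := fun i =>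
        if h : (parent i.castSucc : ℕ) < n then ⟨parent i.castSucc, h⟩ else i with hparent'
      have hparlt : ∀ i : Fin n, 0 < (i:ℕ) → (parent i.castSucc : ℕ) < n := by
        intro i hi
        have := (hpar i.castSucc (by simpa using hi)).1
        have h2 : (parent i.castSucc : ℕ) < (i:ℕ) := by simpa [Fin.lt_def] using this
        omega
      have hparcast : ∀ i : Fin n, 0 < (i:ℕ) → (parent' i).castSucc = parent i.castSucc := by
        intro i hi
        simp only [hparent', dif_pos (hparlt i hi)]
        ext; simp
      have hpar' : ∀ i : Fin n, 0 < (i : ℕ) →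
          parent' i < i ∧ (∀ j : Fin n, j < i → d' (parent' i) i ≤ d' j i) := by
        intro i hi
        have hp := hpar i.castSucc (by simpa using hi)
        constructor
        · have := hp.1
          rw [Fin.lt_def] at this ⊢
          have h2 := hparcast i hi
          have h3 := congrArg Fin.val h2
          simp at h3 this
          omega
        · intro j hj
          have hj' : j.castSucc < i.castSucc := by
            rw [Fin.lt_def] at hj ⊢; simpa using hj
          have := hp.2 j.castSucc hj'
          simp only [hd']
          rw [hparcast i hi]
          exact this
      letI instE' : Fintype T'.edgeSet := (Set.toFinite _).fintype
      have hIH := ih d' hsymm' (fun u v => hnonneg _ _) (fun a b c => hult _ _ _)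
        parent' hpar' T' instE' hT'conn
      set w' : Sym2 (Fin n) → ℝ := Sym2.lift ⟨d', hsymm'⟩ with hw'
      -- LHS split
      have hd_px : d (parent x) x ≤ d u₁ x := by
        have hp := hpar x (by simpa [hxval] using hn)
        exact hp.2 u₁ (by rw [Fin.lt_def, hxval]; exact hu₁n)
      have hLHS : (∑ i ∈ Finset.univ.filter (fun i : Fin (n+1) => 0 < (i:ℕ)), d (parent i) i)
          = (∑ i ∈ Finset.univ.filter (fun i : Fin n => 0 < (i:ℕ)), d' (parent' i) i)
            + d (parent x) x := by
        rw [Finset.sum_filter, Finset.sum_filter, Fin.sum_univ_castSucc]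
        congr 1
        · apply Finset.sum_congr rfl
          intro i _
          by_cases h : 0 < (i:ℕ)
          · rw [if_pos (by simpa using h), if_pos h]
            simp only [hd']
            rw [hparcast i h]
          · rw [if_neg (by simpa using h), if_neg h]
        · rw [if_pos (by simpa [hxval] using hn)]
      -- edge set manipulations
      classical
      have hinst : @SimpleGraph.edgeFinset _ T instE = T.edgeFinset := by
        ext e
        simp [SimpleGraph.mem_edgeFinset]
      rw [hinst]
      have hsplit : ∑ e ∈ T.edgeFinset, w e
          = ∑ e ∈ T.edgeFinset.filter (fun e => x ∈ e), w e
            + ∑ e ∈ T.edgeFinset.filter (fun e => ¬ x ∈ e), w e :=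
        (Finset.sum_filter_add_sum_filter_not _ _ _).symm
      have hEx : ∑ e ∈ T.edgeFinset.filter (fun e => x ∈ e), w e = ∑ u ∈ N, d u x := by
        have himg : T.edgeFinset.filter (fun e => x ∈ e) = N.image (fun u => s(u, x)) := by
          ext e
          induction e using Sym2.ind with
          | _ a b =>
            simp only [Finset.mem_filter, SimpleGraph.mem_edgeFinset, SimpleGraph.mem_edgeSet,
              Sym2.mem_iff, Finset.mem_image, hN, SimpleGraph.mem_neighborFinset]
            constructor
            · rintro ⟨hab, (rfl | rfl)⟩
              · exact ⟨b, hab, Sym2.eq_swap⟩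
              · exact ⟨a, hab.symm, rfl⟩
            · rintro ⟨u, hu, he⟩
              rw [Sym2.eq_iff] at he
              rcases he with ⟨rfl, rfl⟩ | ⟨rfl, rfl⟩
              · exact ⟨hu.symm, Or.inr rfl⟩
              · exact ⟨hu, Or.inl rfl⟩
        rw [himg, Finset.sum_image]
        · apply Finset.sum_congr rfl
          intro u _
          simp [hw]
        · intro u hu v hv he
          rw [Sym2.eq_iff] at he
          rcases he with ⟨h1, _⟩ | ⟨h1, h2⟩
          · exact h1
          · rw [hN, Finset.mem_coe, SimpleGraph.mem_neighborFinset] at hu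
            exact absurd h1 hu.ne'
      -- the image of T' edges
      have hFeq : ∑ e ∈ T'.edgeFinset, w' e
          = ∑ e ∈ T'.edgeFinset.image (Sym2.map Fin.castSucc), w e := by
        rw [Finset.sum_image (fun e₁ _ e₂ _ h =>
          Sym2.map.injective (Fin.castSucc_injective n) h)]
        apply Finset.sum_congr rfl
        intro e _
        induction e using Sym2.ind with
        | _ a b => simp [hw, hw', hd', Sym2.map_pair_eq]
      set G : Finset (Sym2 (Fin (n+1))) := (N.erase u₁).image (fun u => s(u₁, u)) with hG
      have hFsub : T'.edgeFinset.image (Sym2.map Fin.castSucc) ⊆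
          (T.edgeFinset.filter (fun e => ¬ x ∈ e)) ∪ G := by
        intro e he
        obtain ⟨e', he', rfl⟩ := Finset.mem_image.mp he
        induction e' using Sym2.ind with
        | _ a b =>
          rw [SimpleGraph.mem_edgeFinset, SimpleGraph.mem_edgeSet, hT',
            SimpleGraph.fromRel_adj] at he'
          obtain ⟨hne, hr⟩ := he'
          rw [Sym2.map_pair_eq]
          have hxa : x ≠ a.castSucc := fun h => (Fin.castSucc_lt_last a).ne (h.symm.trans hx)
          have hxb : x ≠ b.castSucc := fun h => (Fin.castSucc_lt_last b).ne (h.symm.trans hx)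
          have hmemE0 : T.Adj a.castSucc b.castSucc →
              s(a.castSucc, b.castSucc) ∈ T.edgeFinset.filter (fun e => ¬ x ∈ e) := by
            intro hadj
            rw [Finset.mem_filter, SimpleGraph.mem_edgeFinset]
            exact ⟨hadj, by simp [Sym2.mem_iff, hxa, hxb]⟩
          have hmemG : ∀ c c' : Fin n, c.castSucc = u₁ → T.Adj x c'.castSucc → c ≠ c' →
              s(c.castSucc, c'.castSucc) ∈ G := by
            intro c c' hc hc' hcc'
            rw [hG]
            apply Finset.mem_image.mpr
            refine ⟨c'.castSucc, ?_, by rw [hc]⟩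
            rw [Finset.mem_erase, hN, SimpleGraph.mem_neighborFinset]
            refine ⟨?_, hc'⟩
            intro h
            exact hcc' (Fin.castSucc_injective n (by rw [hc, h]))
          rcases hr with (hadj | ⟨hc, hc'⟩) | (hadj | ⟨hc, hc'⟩)
          · exact Finset.mem_union_left _ (hmemE0 hadj)
          · exact Finset.mem_union_right _ (hmemG a b hc hc' hne)
          · exact Finset.mem_union_left _ (hmemE0 hadj.symm)
          · rw [Sym2.eq_swap]
            exact Finset.mem_union_right _ (hmemG b a hc hc' (Ne.symm hne))
      have hGsum : ∑ e ∈ G, w e ≤ ∑ u ∈ N.erase u₁, d u x := by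
        rw [hG, Finset.sum_image]
        · apply Finset.sum_le_sum
          intro u hu
          have huN : u ∈ N := Finset.mem_of_mem_erase hu
          have hle : d u₁ x ≤ d u x := hu₁min u huN
          have hmax : d u₁ u ≤ max (d u₁ x) (d x u) := hult u₁ x u
          have : max (d u₁ x) (d x u) = d u x := by
            rw [hsymm x u]
            exact max_eq_right hle
          simp only [hw]
          rw [Sym2.lift_mk]
          calc d u₁ u ≤ max (d u₁ x) (d x u) := hmax
            _ = d u x := this
        · intro u hu v hv he
          rw [Sym2.eq_iff] at he
          rcases he with ⟨_, h2⟩ | ⟨h1, h2⟩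
          · exact h2
          · exact h2.trans h1
      have herase : ∑ u ∈ N.erase u₁, d u x + d u₁ x = ∑ u ∈ N, d u x :=
        Finset.sum_erase_add N _ hu₁N
      have hunion : ∑ e ∈ (T.edgeFinset.filter (fun e => ¬ x ∈ e)) ∪ G, w e
          ≤ ∑ e ∈ T.edgeFinset.filter (fun e => ¬ x ∈ e), w e + ∑ e ∈ G, w e := by
        have := Finset.sum_union_inter (s₁ := T.edgeFinset.filter (fun e => ¬ x ∈ e))
          (s₂ := G) (f := w)
        have hnn := Finset.sum_nonneg
          (fun e (_ : e ∈ (T.edgeFinset.filter (fun e => ¬ x ∈ e)) ∩ G) => hwnn e)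
        linarith
      have hsub : ∑ e ∈ T'.edgeFinset.image (Sym2.map Fin.castSucc), w e
          ≤ ∑ e ∈ (T.edgeFinset.filter (fun e => ¬ x ∈ e)) ∪ G, w e :=
        Finset.sum_le_sum_of_subset_of_nonneg hFsub (fun e _ _ => hwnn e)
      rw [hLHS, hsplit]
      have h1 : ∑ i ∈ Finset.univ.filter (fun i : Fin n => 0 < (i:ℕ)), d' (parent' i) i
          ≤ ∑ e ∈ T'.edgeFinset, w' e := hIH
      linarith [hEx, hFeq, hGsum, herase, hunion, hsub, hd_px, h1]

/-- Let `d` be an ultrametric on `n` points arriving in index order, and let `H`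
be the spanning tree produced online by connecting each arriving point `i`
(other than the first) to the earliest-arrived among its nearest earlier
neighbors, `parent i`. Then `H` is a minimum spanning tree: `H` is connected,
and its total weight is at most that of any connected graph on the points. -/
theorem ultrametric_online_tree_is_mst (n : ℕ) (d : Fin n → Fin n → ℝ)
    (hsymm : ∀ u v, d u v = d v u) (hself : ∀ u, d u u = 0)
    (hpos : ∀ u v, u ≠ v → 0 < d u v)
    (hult : ∀ x y z, d x z ≤ max (d x y) (d y z))
    (parent : Fin n → Fin n)
    (hpar : ∀ i : Fin n, 0 < (i : ℕ) →
      parent i < i ∧ (∀ j : Fin n, j < i → d (parent i) i ≤ d j i) ∧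
        (∀ j : Fin n, j < i → d j i = d (parent i) i → parent i ≤ j)) :
    (0 < n → (SimpleGraph.fromRel
        (fun (u v : Fin n) => 0 < (u : ℕ) ∧ parent u = v)).Connected) ∧
      ∀ (T : SimpleGraph (Fin n)), ∀ (_ : DecidableRel T.Adj), T.Connected →
        (∑ i ∈ Finset.univ.filter (fun i : Fin n => 0 < (i : ℕ)), d (parent i) i)
          ≤ ∑ e ∈ T.edgeFinset, Sym2.lift ⟨d, hsymm⟩ e := by
  constructor
  · intro hn
    set H := SimpleGraph.fromRel (fun (u v : Fin n) => 0 < (u : ℕ) ∧ parent u = v) with hH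
    set z : Fin n := ⟨0, hn⟩ with hz
    have hre : ∀ m : ℕ, ∀ i : Fin n, (i:ℕ) ≤ m → H.Reachable z i := by
      intro m
      induction m with
      | zero =>
        intro i hi
        have hz0 : (z : ℕ) = 0 := rfl
        have : i = z := Fin.ext (by omega)
        rw [this]
      | succ m ihm =>
        intro i hi
        by_cases h : 0 < (i:ℕ)
        · have hp := hpar i h
          have hlt : (parent i : ℕ) < (i:ℕ) := hp.1
          have h1 : H.Reachable z (parent i) := ihm (parent i) (by omega)
          have h2 : H.Adj (parent i) i := by
            rw [hH, SimpleGraph.fromRel_adj]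
            refine ⟨?_, Or.inr ⟨h, rfl⟩⟩
            intro he
            have := congrArg Fin.val he
            omega
          exact h1.trans h2.reachable
        · have hz0 : (z : ℕ) = 0 := rfl
          have : i = z := Fin.ext (by omega)
          rw [this]
    haveI : Nonempty (Fin n) := ⟨z⟩
    refine ⟨fun a b => ?_⟩
    exact (hre n a (le_of_lt a.isLt)).symm.trans (hre n b (le_of_lt b.isLt))
  · intro T instT hT
    have hnn : ∀ u v, 0 ≤ d u v := by
      intro u v
      by_cases h : u = v
      · rw [h, hself]
      · exact le_of_lt (hpos u v h)
    exact um_key n d hsymm hnn hult parent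
      (fun i hi => ⟨(hpar i hi).1, (hpar i hi).2.1⟩) T _ hT
end

section
/- Let U be a finite ultrametric and 0 < ε < 1/2. Set κ = ⌊log_{1+ε} ε^{−1}⌋. For each i ∈ {0,…,κ}, define d_i(u,v) to be the smallest value of the form (1+ε)^i·ε^{−j} (j ∈ ℤ) that is at least d_U(u,v). Then: (a) each (X, d_i) is an ε^{−1}-HST (an ultrametric whose distinct distance values are separated by factors of at least ε^{−1}); (b) for every pair u,v there exists i ∈ {0,…,κ} with d_i(u,v) ≤ (1+ε)·d_U(u,v); and (c) for every fixed pair u,v, Σ_{i=0}^{κ} d_i(u,v) ≤ O(ε^{−2})·d_U(u,v). -/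
open Classical in
/-- `dRound ε i u v` is the smallest value of the form `(1+ε)^i · ε^{−j}`
(`j ∈ ℤ`) that is at least `d(u,v)` (and `0` for `u = v`). -/
noncomputable def dRound (ε : ℝ) {X : Type*} [MetricSpace X] (i : ℕ) (u v : X) : ℝ :=
  if u = v then 0
  else (1 + ε) ^ i * (ε⁻¹) ^ (⌈Real.logb ε⁻¹ (dist u v / (1 + ε) ^ i)⌉ : ℤ)

/-- the rounding function on reals -/
noncomputable def rnd (ε : ℝ) (i : ℕ) (d : ℝ) : ℝ :=
  (1 + ε) ^ i * (ε⁻¹) ^ (⌈Real.logb ε⁻¹ (d / (1 + ε) ^ i)⌉ : ℤ)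

lemma dRound_ne {ε : ℝ} {X : Type*} [MetricSpace X] (i : ℕ) {u v : X} (h : u ≠ v) :
    dRound ε i u v = rnd ε i (dist u v) := if_neg h

lemma rnd_pos {ε : ℝ} (hε : 0 < ε) (i : ℕ) (d : ℝ) : 0 < rnd ε i d :=
  mul_pos (pow_pos (by linarith) i) (zpow_pos (inv_pos.mpr hε) _)

lemma one_lt_binv {ε : ℝ} (hε : 0 < ε) (hε1 : ε < 1) : 1 < ε⁻¹ := by
  rw [show ε⁻¹ = 1/ε by ring, lt_div_iff₀ hε]; linarith

lemma le_rnd {ε : ℝ} (hε : 0 < ε) (hε1 : ε < 1) (i : ℕ) {d : ℝ} (hd : 0 < d) :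
    d ≤ rnd ε i d := by
  have hA : (0:ℝ) < (1 + ε) ^ i := by positivity
  have hb : (1:ℝ) < ε⁻¹ := one_lt_binv hε hε1
  have hb0 : (0:ℝ) < ε⁻¹ := inv_pos.mpr hε
  have hx : 0 < d / (1 + ε) ^ i := div_pos hd hA
  have h1 : d / (1 + ε) ^ i ≤ (ε⁻¹) ^ (⌈Real.logb ε⁻¹ (d / (1 + ε) ^ i)⌉ : ℤ) := by
    calc d / (1 + ε) ^ i = ε⁻¹ ^ Real.logb ε⁻¹ (d / (1 + ε) ^ i) :=
          (Real.rpow_logb hb0 (ne_of_gt hb) hx).symm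
      _ ≤ ε⁻¹ ^ ((⌈Real.logb ε⁻¹ (d / (1 + ε) ^ i)⌉ : ℤ) : ℝ) :=
          Real.rpow_le_rpow_of_exponent_le hb.le (Int.le_ceil _)
      _ = _ := Real.rpow_intCast _ _
  calc d = (1 + ε) ^ i * (d / (1 + ε) ^ i) := by field_simp
    _ ≤ rnd ε i d := mul_le_mul_of_nonneg_left h1 hA.le

lemma rnd_le {ε : ℝ} (hε : 0 < ε) (hε1 : ε < 1) (i : ℕ) {d : ℝ} (hd : 0 < d) {j : ℤ}
    (h : d ≤ (1 + ε) ^ i * (ε⁻¹) ^ j) : rnd ε i d ≤ (1 + ε) ^ i * (ε⁻¹) ^ j := by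
  have hA : (0:ℝ) < (1 + ε) ^ i := by positivity
  have hb : (1:ℝ) < ε⁻¹ := one_lt_binv hε hε1
  have hx : 0 < d / (1 + ε) ^ i := div_pos hd hA
  have hlog : Real.logb ε⁻¹ (d / (1 + ε) ^ i) ≤ (j : ℝ) := by
    rw [Real.logb_le_iff_le_rpow hb hx, Real.rpow_intCast, div_le_iff₀ hA]
    linarith [h]
  have hceil : ⌈Real.logb ε⁻¹ (d / (1 + ε) ^ i)⌉ ≤ j := Int.ceil_le.mpr hlog
  exact mul_le_mul_of_nonneg_left (zpow_le_zpow_right₀ hb.le hceil) hA.le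

lemma rnd_mono {ε : ℝ} (hε : 0 < ε) (hε1 : ε < 1) (i : ℕ) {d1 d2 : ℝ}
    (h1 : 0 < d1) (h2 : d1 ≤ d2) : rnd ε i d1 ≤ rnd ε i d2 := by
  have hd2 : 0 < d2 := lt_of_lt_of_le h1 h2
  have h3 := le_rnd hε hε1 i hd2
  rw [rnd] at h3 ⊢
  exact rnd_le hε hε1 i h1 (h2.trans h3)

lemma dRound_nonneg {ε : ℝ} (hε : 0 < ε) {X : Type*} [MetricSpace X] (i : ℕ) (u v : X) :
    0 ≤ dRound ε i u v := by
  by_cases h : u = v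
  · simp [dRound, h]
  · rw [dRound_ne i h]; exact (rnd_pos hε i _).le

/-- Let `(X, d_U)` be an ultrametric, `0 < ε < 1/2`, and
`κ = ⌊log_{1+ε} ε⁻¹⌋`. For `i ∈ {0, …, κ}`, let `d_i(u,v)` be the smallest value
`(1+ε)^i·ε^{−j}` (`j ∈ ℤ`) at least `d_U(u,v)`. Then (a) each `(X, d_i)` is an
`ε⁻¹`-HST (an ultrametric whose distinct positive distances are separated by
factors of at least `ε⁻¹`); (b) for every `u ≠ v` some `i ≤ κ` has
`d_i(u,v) ≤ (1+ε)·d_U(u,v)`; and (c) `Σ_{i=0}^{κ} d_i(u,v) ≤ O(ε⁻²)·d_U(u,v)`. -/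
theorem ultrametric_hst_decomposition :
    ∃ C : ℝ, 0 < C ∧
      ∀ (X : Type) [inst : MetricSpace X],
        (∀ x y z : X, dist x z ≤ max (dist x y) (dist y z)) →
        ∀ ε : ℝ, 0 < ε → ε < 1 / 2 →
          (∀ i ≤ Nat.floor (Real.logb (1 + ε) ε⁻¹),
            (∀ u v : X, dRound ε i u v = dRound ε i v u) ∧
            (∀ u v : X, dRound ε i u v = 0 ↔ u = v) ∧
            (∀ x y z : X,
              dRound ε i x z ≤ max (dRound ε i x y) (dRound ε i y z)) ∧
            (∀ u v x y : X, 0 < dRound ε i u v →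
              dRound ε i u v < dRound ε i x y →
              ε⁻¹ * dRound ε i u v ≤ dRound ε i x y)) ∧
          (∀ u v : X, u ≠ v →
            ∃ i ≤ Nat.floor (Real.logb (1 + ε) ε⁻¹),
              dRound ε i u v ≤ (1 + ε) * dist u v) ∧
          (∀ u v : X,
            ∑ i ∈ Finset.range (Nat.floor (Real.logb (1 + ε) ε⁻¹) + 1),
              dRound ε i u v ≤ C / ε ^ 2 * dist u v) := by
  classical
  refine ⟨3, by norm_num, ?_⟩
  intro X inst hultra ε hε hε2
  have hε1 : ε < 1 := by linarith
  have hb : (1:ℝ) < ε⁻¹ := one_lt_binv hε hε1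
  have hb0 : (0:ℝ) < ε⁻¹ := inv_pos.mpr hε
  have hA : (1:ℝ) < 1 + ε := by linarith
  set κ := Nat.floor (Real.logb (1 + ε) ε⁻¹) with hκdef
  have hlogb_nonneg : 0 ≤ Real.logb (1 + ε) ε⁻¹ := Real.logb_nonneg hA hb.le
  have hκ_le : (1 + ε) ^ κ ≤ ε⁻¹ := by
    calc (1 + ε) ^ κ = (1 + ε) ^ ((κ : ℕ) : ℝ) := (Real.rpow_natCast _ _).symm
      _ ≤ (1 + ε) ^ Real.logb (1 + ε) ε⁻¹ :=
          Real.rpow_le_rpow_of_exponent_le hA.le (Nat.floor_le hlogb_nonneg)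
      _ = ε⁻¹ := Real.rpow_logb (by linarith) (ne_of_gt hA) hb0
  have hκ_lt : ε⁻¹ < (1 + ε) ^ (κ + 1) := by
    calc ε⁻¹ = (1 + ε) ^ Real.logb (1 + ε) ε⁻¹ :=
          (Real.rpow_logb (by linarith) (ne_of_gt hA) hb0).symm
      _ < (1 + ε) ^ (((κ : ℕ) : ℝ) + 1) :=
          Real.rpow_lt_rpow_of_exponent_lt hA (Nat.lt_floor_add_one _)
      _ = (1 + ε) ^ (κ + 1) := by
          rw [← Real.rpow_natCast (1 + ε) (κ + 1)]; push_cast; ring_nf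
  refine ⟨?_, ?_, ?_⟩
  · -- (a)
    intro i _hi
    refine ⟨?_, ?_, ?_, ?_⟩
    · intro u v
      by_cases h : u = v
      · rw [h]
      · rw [dRound_ne i h, dRound_ne i (Ne.symm h), dist_comm]
    · intro u v
      constructor
      · intro h0
        by_contra h
        have h1 := rnd_pos hε i (dist u v)
        rw [dRound_ne i h] at h0
        linarith
      · intro h; simp [dRound, h]
    · intro x y z
      by_cases hxz : x = z
      · have h0 : dRound ε i x z = 0 := by simp [dRound, hxz]
        rw [h0]
        exact le_trans (dRound_nonneg hε i x y) (le_max_left _ _)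
      · have hdxz : 0 < dist x z := dist_pos.mpr hxz
        rcases le_max_iff.mp (hultra x y z) with h | h
        · have hxy : x ≠ y := by
            intro e; rw [← e, dist_self] at h; linarith
          refine le_trans ?_ (le_max_left _ _)
          rw [dRound_ne i hxz, dRound_ne i hxy]
          exact rnd_mono hε hε1 i hdxz h
        · have hyz : y ≠ z := by
            intro e; rw [e, dist_self] at h; linarith
          refine le_trans ?_ (le_max_right _ _)
          rw [dRound_ne i hxz, dRound_ne i hyz]
          exact rnd_mono hε hε1 i hdxz h
    · intro u v x y hpos hlt
      have huv : u ≠ v := by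
        intro e; rw [e] at hpos; simp [dRound] at hpos
      have hxy : x ≠ y := by
        intro e
        have h0 : dRound ε i x y = 0 := by simp [dRound, e]
        rw [h0] at hlt
        linarith
      rw [dRound_ne i huv] at hpos hlt ⊢
      rw [dRound_ne i hxy] at hlt ⊢
      rw [rnd] at hlt ⊢
      set j1 : ℤ := ⌈Real.logb ε⁻¹ (dist u v / (1 + ε) ^ i)⌉
      set j2 : ℤ := ⌈Real.logb ε⁻¹ (dist x y / (1 + ε) ^ i)⌉
      have hAp : (0:ℝ) < (1 + ε) ^ i := by positivity
      have hzlt : (ε⁻¹ : ℝ) ^ j1 < ε⁻¹ ^ j2 := lt_of_mul_lt_mul_left hlt hAp.le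
      have hjlt : j1 < j2 := (zpow_lt_zpow_iff_right₀ hb).mp hzlt
      have h1 : (ε⁻¹ : ℝ) ^ (j1 + 1) ≤ ε⁻¹ ^ j2 := zpow_le_zpow_right₀ hb.le (by omega)
      rw [zpow_add_one₀ (ne_of_gt hb0)] at h1
      calc ε⁻¹ * ((1 + ε) ^ i * ε⁻¹ ^ j1) = (1 + ε) ^ i * (ε⁻¹ ^ j1 * ε⁻¹) := by ring
        _ ≤ (1 + ε) ^ i * ε⁻¹ ^ j2 := mul_le_mul_of_nonneg_left h1 hAp.le
  · -- (b)
    intro u v huv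
    have hd : 0 < dist u v := dist_pos.mpr huv
    set d := dist u v with hdd
    set j1 : ℤ := ⌈Real.logb ε⁻¹ d⌉ with hj1def
    have hj1_ge : d ≤ ε⁻¹ ^ j1 := by
      calc d = ε⁻¹ ^ Real.logb ε⁻¹ d := (Real.rpow_logb hb0 (ne_of_gt hb) hd).symm
        _ ≤ ε⁻¹ ^ ((j1 : ℤ) : ℝ) := Real.rpow_le_rpow_of_exponent_le hb.le (Int.le_ceil _)
        _ = ε⁻¹ ^ j1 := Real.rpow_intCast _ _
    have hj1_lt : ε⁻¹ ^ (j1 - 1) < d := by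
      calc (ε⁻¹ : ℝ) ^ (j1 - 1) = ε⁻¹ ^ (((j1 - 1 : ℤ)) : ℝ) := (Real.rpow_intCast _ _).symm
        _ < ε⁻¹ ^ Real.logb ε⁻¹ d := by
            apply Real.rpow_lt_rpow_of_exponent_lt hb
            push_cast
            linarith [Int.ceil_lt_add_one (Real.logb ε⁻¹ d)]
        _ = d := Real.rpow_logb hb0 (ne_of_gt hb) hd
    by_cases hcase : d ≤ (1 + ε) ^ κ * ε⁻¹ ^ (j1 - 1)
    · have hex : ∃ i, d ≤ (1 + ε) ^ i * ε⁻¹ ^ (j1 - 1) := ⟨κ, hcase⟩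
      set i0 := Nat.find hex with hi0def
      have hspec : d ≤ (1 + ε) ^ i0 * ε⁻¹ ^ (j1 - 1) := Nat.find_spec hex
      have hi0κ : i0 ≤ κ := Nat.find_le hcase
      have hi0pos : 0 < i0 := by
        rcases Nat.eq_zero_or_pos i0 with h0 | h
        · exfalso
          have h1 := hspec
          rw [h0, pow_zero, one_mul] at h1
          linarith
        · exact h
      have hmin : ¬ d ≤ (1 + ε) ^ (i0 - 1) * ε⁻¹ ^ (j1 - 1) := Nat.find_min hex (by omega)
      push_neg at hmin
      refine ⟨i0, hi0κ, ?_⟩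
      rw [dRound_ne i0 huv]
      have h1 := rnd_le hε hε1 i0 hd hspec
      have h2 : (1 + ε) ^ i0 = (1 + ε) * (1 + ε) ^ (i0 - 1) := by
        conv_lhs => rw [show i0 = (i0 - 1) + 1 by omega]
        ring
      calc rnd ε i0 d ≤ (1 + ε) ^ i0 * ε⁻¹ ^ (j1 - 1) := h1
        _ = (1 + ε) * ((1 + ε) ^ (i0 - 1) * ε⁻¹ ^ (j1 - 1)) := by rw [h2]; ring
        _ ≤ (1 + ε) * d := mul_le_mul_of_nonneg_left hmin.le (by linarith)
    · push_neg at hcase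
      refine ⟨0, Nat.zero_le _, ?_⟩
      rw [dRound_ne 0 huv]
      have h1 : d ≤ (1 + ε) ^ (0:ℕ) * ε⁻¹ ^ j1 := by simpa using hj1_ge
      have h2 := rnd_le hε hε1 0 hd h1
      have h3 : (ε⁻¹ : ℝ) ^ j1 = ε⁻¹ ^ (j1 - 1) * ε⁻¹ := by
        rw [← zpow_add_one₀ (ne_of_gt hb0)]; congr 1; omega
      have hz : (0:ℝ) < ε⁻¹ ^ (j1 - 1) := zpow_pos hb0 _
      calc rnd ε 0 d ≤ (1 + ε) ^ (0:ℕ) * ε⁻¹ ^ j1 := h2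
        _ = ε⁻¹ ^ (j1 - 1) * ε⁻¹ := by rw [h3]; ring
        _ ≤ ε⁻¹ ^ (j1 - 1) * (1 + ε) ^ (κ + 1) := by nlinarith [hκ_lt]
        _ = (1 + ε) * ((1 + ε) ^ κ * ε⁻¹ ^ (j1 - 1)) := by ring
        _ ≤ (1 + ε) * d := mul_le_mul_of_nonneg_left hcase.le (by linarith)
  · -- (c)
    intro u v
    by_cases huv : u = v
    · simp [dRound, huv]
    · have hd : 0 < dist u v := dist_pos.mpr huv
      set d := dist u v with hdd
      set j1 : ℤ := ⌈Real.logb ε⁻¹ d⌉ with hj1def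
      have hj1_ge : d ≤ ε⁻¹ ^ j1 := by
        calc d = ε⁻¹ ^ Real.logb ε⁻¹ d := (Real.rpow_logb hb0 (ne_of_gt hb) hd).symm
          _ ≤ ε⁻¹ ^ ((j1 : ℤ) : ℝ) := Real.rpow_le_rpow_of_exponent_le hb.le (Int.le_ceil _)
          _ = ε⁻¹ ^ j1 := Real.rpow_intCast _ _
      have hj1_lt : ε⁻¹ ^ (j1 - 1) < d := by
        calc (ε⁻¹ : ℝ) ^ (j1 - 1) = ε⁻¹ ^ (((j1 - 1 : ℤ)) : ℝ) := (Real.rpow_intCast _ _).symm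
          _ < ε⁻¹ ^ Real.logb ε⁻¹ d := by
              apply Real.rpow_lt_rpow_of_exponent_lt hb
              push_cast
              linarith [Int.ceil_lt_add_one (Real.logb ε⁻¹ d)]
          _ = d := Real.rpow_logb hb0 (ne_of_gt hb) hd
      have hz : (0:ℝ) < ε⁻¹ ^ (j1 - 1) := zpow_pos hb0 _
      have hz1 : (0:ℝ) < ε⁻¹ ^ j1 := zpow_pos hb0 _
      have h3 : (ε⁻¹ : ℝ) ^ j1 = ε⁻¹ ^ (j1 - 1) * ε⁻¹ := by
        rw [← zpow_add_one₀ (ne_of_gt hb0)]; congr 1; omega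
      have key : ∀ i ∈ Finset.range (κ + 1), dRound ε i u v ≤
          (1 + ε) ^ i * ε⁻¹ ^ (j1 - 1) +
          (if (1 + ε) ^ i * ε⁻¹ ^ (j1 - 1) < d then (1 + ε) ^ i * ε⁻¹ ^ j1 else 0) := by
        intro i _hi
        rw [dRound_ne i huv]
        by_cases hc : (1 + ε) ^ i * ε⁻¹ ^ (j1 - 1) < d
        · rw [if_pos hc]
          have hone : (1:ℝ) ≤ (1 + ε) ^ i := one_le_pow₀ (by linarith)
          have h1 : d ≤ (1 + ε) ^ i * ε⁻¹ ^ j1 := by nlinarith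
          have h2 := rnd_le hε hε1 i hd h1
          have h0 : (0:ℝ) ≤ (1 + ε) ^ i * ε⁻¹ ^ (j1 - 1) := by positivity
          linarith
        · rw [if_neg hc]
          push_neg at hc
          simpa using rnd_le hε hε1 i hd hc
      have hgeom : ∀ n : ℕ, ∑ i ∈ Finset.range n, (1 + ε) ^ i = ((1 + ε) ^ n - 1) / ε := by
        intro n
        rw [geom_sum_eq (by intro h; linarith [h] : (1:ℝ) + ε ≠ 1) n]
        congr 1; ring
      have hS1 : ∑ i ∈ Finset.range (κ + 1), (1 + ε) ^ i * ε⁻¹ ^ (j1 - 1) ≤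
          (1 + ε) / ε ^ 2 * d := by
        rw [← Finset.sum_mul, hgeom]
        rw [div_mul_eq_mul_div, div_le_iff₀ hε]
        have he : (1 + ε) / ε ^ 2 * d * ε = (1 + ε) * ε⁻¹ * d := by
          field_simp
        rw [he]
        have hpκ : (1 + ε) ^ (κ + 1) ≤ (1 + ε) * ε⁻¹ := by
          calc (1 + ε) ^ (κ + 1) = (1 + ε) * (1 + ε) ^ κ := by ring
            _ ≤ (1 + ε) * ε⁻¹ := mul_le_mul_of_nonneg_left hκ_le (by linarith)
        nlinarith [mul_le_mul_of_nonneg_right hpκ hz.le,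
          mul_le_mul_of_nonneg_left hj1_lt.le (by positivity : (0:ℝ) ≤ (1 + ε) * ε⁻¹)]
      have hS2 : ∑ i ∈ Finset.range (κ + 1),
          (if (1 + ε) ^ i * ε⁻¹ ^ (j1 - 1) < d then (1 + ε) ^ i * ε⁻¹ ^ j1 else 0) ≤
          (1 + ε) / ε ^ 2 * d := by
        rw [← Finset.sum_filter]
        set S := (Finset.range (κ + 1)).filter (fun i => (1 + ε) ^ i * ε⁻¹ ^ (j1 - 1) < d)
          with hSdef
        rcases S.eq_empty_or_nonempty with hemp | hne
        · rw [hemp]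
          simp
          positivity
        · set M := S.max' hne with hMdef
          have hMS : M ∈ S := S.max'_mem hne
          have hMlt : (1 + ε) ^ M * ε⁻¹ ^ (j1 - 1) < d := (Finset.mem_filter.mp hMS).2
          have hsub : S ⊆ Finset.range (M + 1) := by
            intro x hx
            rw [Finset.mem_range]
            exact Nat.lt_succ_of_le (Finset.le_max' S x hx)
          have h4 : ∑ i ∈ S, (1 + ε) ^ i * ε⁻¹ ^ j1 ≤
              ∑ i ∈ Finset.range (M + 1), (1 + ε) ^ i * ε⁻¹ ^ j1 := by
            apply Finset.sum_le_sum_of_subset_of_nonneg hsub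
            intro i _ _
            exact mul_nonneg (pow_nonneg (by linarith) i) hz1.le
          have h6 : ∑ i ∈ Finset.range (M + 1), (1 + ε) ^ i * ε⁻¹ ^ j1 =
              ((1 + ε) ^ (M + 1) - 1) / ε * ε⁻¹ ^ j1 := by
            rw [← Finset.sum_mul, hgeom]
          have h5 : (1 + ε) ^ M * ε⁻¹ ^ j1 < d * ε⁻¹ := by
            rw [h3]
            calc (1 + ε) ^ M * (ε⁻¹ ^ (j1 - 1) * ε⁻¹) =
                ((1 + ε) ^ M * ε⁻¹ ^ (j1 - 1)) * ε⁻¹ := by ring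
              _ < d * ε⁻¹ := by exact mul_lt_mul_of_pos_right hMlt hb0
          have h7 : ((1 + ε) ^ (M + 1) - 1) / ε * ε⁻¹ ^ j1 ≤ (1 + ε) / ε ^ 2 * d := by
            rw [div_mul_eq_mul_div, div_le_iff₀ hε]
            have he : (1 + ε) / ε ^ 2 * d * ε = (1 + ε) * (d * ε⁻¹) := by
              field_simp
            rw [he]
            have h8 : (1 + ε) ^ (M + 1) * ε⁻¹ ^ j1 ≤ (1 + ε) * (d * ε⁻¹) := by
              have h9 : (1 + ε) ^ (M + 1) * ε⁻¹ ^ j1 =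
                  (1 + ε) * ((1 + ε) ^ M * ε⁻¹ ^ j1) := by ring
              rw [h9]
              exact mul_le_mul_of_nonneg_left h5.le (by linarith)
            nlinarith [hz1]
          calc ∑ i ∈ S, (1 + ε) ^ i * ε⁻¹ ^ j1 ≤ _ := h4
            _ = _ := h6
            _ ≤ _ := h7
      calc ∑ i ∈ Finset.range (κ + 1), dRound ε i u v ≤
          ∑ i ∈ Finset.range (κ + 1), ((1 + ε) ^ i * ε⁻¹ ^ (j1 - 1) +
            (if (1 + ε) ^ i * ε⁻¹ ^ (j1 - 1) < d then (1 + ε) ^ i * ε⁻¹ ^ j1 else 0)) :=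
          Finset.sum_le_sum key
        _ = (∑ i ∈ Finset.range (κ + 1), (1 + ε) ^ i * ε⁻¹ ^ (j1 - 1)) +
            ∑ i ∈ Finset.range (κ + 1),
              (if (1 + ε) ^ i * ε⁻¹ ^ (j1 - 1) < d then (1 + ε) ^ i * ε⁻¹ ^ j1 else 0) :=
          Finset.sum_add_distrib
        _ ≤ (1 + ε) / ε ^ 2 * d + (1 + ε) / ε ^ 2 * d := add_le_add hS1 hS2
        _ ≤ 3 / ε ^ 2 * d := by
            have hε2pos : (0:ℝ) < ε ^ 2 := by positivity
            rw [← add_mul, ← add_div]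
            gcongr
            linarith
end
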